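/- arXiv:math/0510509 — 4 statements merged into one kernel-verified Lean document; each statement's English description precedes it below -/
import Mathlib

section
/- Let X be a proper CAT(0) space, g a hyperbolic isometry of X, and x₀ ∈ Min(g). A geodesic ray ξ with ξ(0) = x₀ satisfies: ξ and g∘ξ are asymptotic if and only if the image of ξ is contained in Min(g). Consequently the fixed-point set of g acting on the boundary ∂X equals the boundary ∂Min(g) of the minimal set. -/
/-- A geodesic ray: an isometric embedding of `[0,∞)`. -/
def GeodesicRay {X : Type*} [MetricSpace X] (ξ : ℝ → X) : Prop :=
  ∀ s t : ℝ, 0 ≤ s → 0 ≤ t → dist (ξ s) (ξ t) = |s - t|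

/-- Two geodesic rays are asymptotic if they stay at bounded distance. -/
def Asymptotic {X : Type*} [MetricSpace X] (ξ ζ : ℝ → X) : Prop :=
  ∃ N : ℝ, ∀ t : ℝ, 0 ≤ t → dist (ξ t) (ζ t) ≤ N

/-- `γ` restricted to `[a,b]` is a geodesic. -/
def IsGeodesicOn {X : Type*} [MetricSpace X] (γ : ℝ → X) (a b : ℝ) : Prop :=
  ∀ s ∈ Set.Icc a b, ∀ t ∈ Set.Icc a b, dist (γ s) (γ t) = |s - t|

/-- A geodesic metric space: any two points are joined by a geodesic. -/
def GeodesicSpace (X : Type*) [MetricSpace X] : Prop :=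
  ∀ x y : X, ∃ γ : ℝ → X, γ 0 = x ∧ γ (dist x y) = y ∧ IsGeodesicOn γ 0 (dist x y)

/-- A CAT(0) space: a geodesic space satisfying the CN (Bruhat–Tits) inequality,
which is equivalent to the CAT(0) comparison-triangle inequality. -/
def CAT0 (X : Type*) [MetricSpace X] : Prop :=
  GeodesicSpace X ∧
  ∀ x y z m : X, dist y m = dist y z / 2 → dist z m = dist y z / 2 →
    dist x m ^ 2 ≤ (dist x y ^ 2 + dist x z ^ 2) / 2 - dist y z ^ 2 / 4

/-- The translation length of an isometry. -/
noncomputable def translationLength {X : Type*} [MetricSpace X] (g : X ≃ᵢ X) : ℝ :=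
  ⨅ x : X, dist x (g x)

/-- The minimal set of an isometry. -/
noncomputable def minSet {X : Type*} [MetricSpace X] (g : X ≃ᵢ X) : Set X :=
  {x | dist x (g x) = translationLength g}

/-- A hyperbolic isometry: nonempty minimal set and positive translation length. -/
def IsHyperbolic {X : Type*} [MetricSpace X] (g : X ≃ᵢ X) : Prop :=
  (minSet g).Nonempty ∧ 0 < translationLength g

/-- The set of geodesic rays in `X`. -/
def Ray (X : Type*) [MetricSpace X] := {ξ : ℝ → X // GeodesicRay ξ}

/-- Asymptoticity is an equivalence relation on geodesic rays. -/
def raySetoid (X : Type*) [MetricSpace X] : Setoid (Ray X) where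
  r ξ ζ := Asymptotic ξ.1 ζ.1
  iseqv := by
    refine ⟨fun ξ => ⟨0, fun t _ => by simp⟩, fun {ξ ζ} h => ?_, fun {a b c} h h' => ?_⟩
    · obtain ⟨N, hN⟩ := h
      exact ⟨N, fun t ht => by rw [dist_comm]; exact hN t ht⟩
    · obtain ⟨N, hN⟩ := h; obtain ⟨M, hM⟩ := h'
      exact ⟨N + M, fun t ht =>
        (dist_triangle _ (b.1 t) _).trans (add_le_add (hN t ht) (hM t ht))⟩

/-- The (visual) boundary of `X`: asymptotic classes of geodesic rays. -/
def Boundary (X : Type*) [MetricSpace X] := Quotient (raySetoid X)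

/-- The image of a geodesic ray under an isometry. -/
def rayMap {X : Type*} [MetricSpace X] (g : X ≃ᵢ X) (ξ : Ray X) : Ray X :=
  ⟨fun t => g (ξ.1 t), fun s t hs ht => by
    rw [IsometryEquiv.dist_eq]; exact ξ.2 s t hs ht⟩

/-- The induced map of an isometry on the boundary. -/
def boundaryMap {X : Type*} [MetricSpace X] (g : X ≃ᵢ X) : Boundary X → Boundary X :=
  @Quotient.map _ _ (raySetoid X) (raySetoid X) (rayMap g)
    (fun ξ ζ h => by
      obtain ⟨N, hN⟩ := h
      exact ⟨N, fun t ht => by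
        simpa [rayMap, IsometryEquiv.dist_eq] using hN t ht⟩)

/-- The boundary of a subset `A ⊆ X`: classes of geodesic rays with image in `A`. -/
def subBoundary {X : Type*} [MetricSpace X] (A : Set X) : Set (Boundary X) :=
  {α | ∃ ξ : Ray X, (∀ t : ℝ, 0 ≤ t → ξ.1 t ∈ A) ∧ Quotient.mk (raySetoid X) ξ = α}

lemma midconvex_interp {h : ℝ → ℝ} {a b K : ℝ} (hab : a < b) (hK : 0 ≤ K)
    (hmc : ∀ s ∈ Set.Icc a b, ∀ t ∈ Set.Icc a b, h ((s + t) / 2) ≤ (h s + h t) / 2)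
    (hlip : ∀ s ∈ Set.Icc a b, ∀ t ∈ Set.Icc a b, |h s - h t| ≤ K * |s - t|) :
    ∀ t ∈ Set.Icc a b, h t ≤ h a + (t - a) / (b - a) * (h b - h a) := by
  have hba : (0:ℝ) < b - a := by linarith
  set ℓ : ℝ → ℝ := fun t => h a + (t - a) / (b - a) * (h b - h a) with hℓ
  have hmem : ∀ (k i : ℕ), i ≤ 2 ^ k → a + i * (b - a) / 2 ^ k ∈ Set.Icc a b := by
    intro k i hik
    have h2 : (0:ℝ) < 2 ^ k := by positivity
    have hic : (i : ℝ) ≤ 2 ^ k := by exact_mod_cast hik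
    constructor
    · have : 0 ≤ (i:ℝ) * (b - a) / 2 ^ k :=
        div_nonneg (mul_nonneg (Nat.cast_nonneg i) hba.le) h2.le
      linarith
    · have h1 : (i:ℝ) * (b - a) / 2 ^ k ≤ b - a := by
        rw [div_le_iff₀ h2]; nlinarith
      linarith
  have key : ∀ k i : ℕ, i ≤ 2 ^ k →
      h (a + i * (b - a) / 2 ^ k) ≤ ℓ (a + i * (b - a) / 2 ^ k) := by
    intro k
    induction k with
    | zero =>
      intro i hi
      interval_cases i
      · have e : a + (0:ℕ) * (b - a) / 2 ^ 0 = a := by norm_num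
        rw [e]
        have : ℓ a = h a := by simp [hℓ]
        rw [this]
      · have e : a + (1:ℕ) * (b - a) / 2 ^ 0 = b := by norm_num
        rw [e]
        have : ℓ b = h b := by
          simp only [hℓ]
          rw [div_self hba.ne']; ring
        rw [this]
    | succ k ih =>
      intro i hi
      have h2k : ((2:ℝ)) ^ k ≠ 0 := by positivity
      rcases Nat.even_or_odd i with ⟨j, hj⟩ | ⟨j, hj⟩
      · subst hj
        have hj2 : j ≤ 2 ^ k := by
          have : 2 ^ (k+1) = 2 * 2 ^ k := by ring
          omega
        have e : a + (↑(j + j)) * (b - a) / 2 ^ (k + 1) = a + j * (b - a) / 2 ^ k := by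
          push_cast
          rw [pow_succ]
          field_simp
          ring
        rw [e]
        exact ih j hj2
      · subst hj
        have hj1 : j + 1 ≤ 2 ^ k := by
          have : 2 ^ (k+1) = 2 * 2 ^ k := by ring
          omega
        have hj0 : j ≤ 2 ^ k := le_trans (Nat.le_succ j) hj1
        have hpmem := hmem k j hj0
        have hqmem := hmem k (j+1) hj1
        have ihp := ih j hj0
        have ihq := ih (j+1) hj1
        have e : a + (↑(2 * j + 1)) * (b - a) / 2 ^ (k + 1)
            = ((a + j * (b - a) / 2 ^ k) + (a + (↑(j+1)) * (b - a) / 2 ^ k)) / 2 := by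
          push_cast
          rw [pow_succ]
          field_simp
          ring
        rw [e]
        calc h (((a + j * (b - a) / 2 ^ k) + (a + (↑(j+1)) * (b - a) / 2 ^ k)) / 2)
            ≤ (h (a + j * (b - a) / 2 ^ k) + h (a + (↑(j+1)) * (b - a) / 2 ^ k)) / 2 :=
              hmc _ hpmem _ hqmem
          _ ≤ (ℓ (a + j * (b - a) / 2 ^ k) + ℓ (a + (↑(j+1)) * (b - a) / 2 ^ k)) / 2 := by
              linarith
          _ = ℓ (((a + j * (b - a) / 2 ^ k) + (a + (↑(j+1)) * (b - a) / 2 ^ k)) / 2) := by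
              simp only [hℓ]; ring
  intro t ht
  refine le_of_forall_pos_le_add ?_
  intro ε hε
  obtain ⟨k, hk⟩ := pow_unbounded_of_one_lt ((K * (b - a) + |h b - h a|) / ε) one_lt_two
  have h2k : (0:ℝ) < 2 ^ k := by positivity
  set i := ⌊(t - a) * 2 ^ k / (b - a)⌋₊ with hidef
  have hta : 0 ≤ (t - a) * 2 ^ k / (b - a) :=
    div_nonneg (mul_nonneg (by linarith [ht.1]) h2k.le) hba.le
  have hfl : (i:ℝ) ≤ (t - a) * 2 ^ k / (b - a) := Nat.floor_le hta
  have hfl2 : (t - a) * 2 ^ k / (b - a) < i + 1 := Nat.lt_floor_add_one _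
  have hik : i ≤ 2 ^ k := by
    have hle : (t - a) * 2 ^ k / (b - a) ≤ 2 ^ k := by
      rw [div_le_iff₀ hba]; nlinarith [ht.2]
    have : (i:ℝ) ≤ (2:ℝ) ^ k := le_trans hfl hle
    exact_mod_cast this
  set dy := a + i * (b - a) / 2 ^ k with hdydef
  have hdymem : dy ∈ Set.Icc a b := hmem k i hik
  have hfl' : (i:ℝ) * (b - a) ≤ (t - a) * 2 ^ k := by
    rw [le_div_iff₀ hba] at hfl; exact hfl
  have hdyt : dy ≤ t := by
    have : (i:ℝ) * (b - a) / 2 ^ k ≤ t - a := by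
      rw [div_le_iff₀ h2k]; exact hfl'
    simp only [hdydef]; linarith
  have hfl2' : (t - a) * 2 ^ k < ((i:ℝ) + 1) * (b - a) := by
    rw [div_lt_iff₀ hba] at hfl2; exact hfl2
  have htdy : t - dy ≤ (b - a) / 2 ^ k := by
    rw [le_div_iff₀ h2k] -- (t - dy) * 2^k ≤ b - a
    simp only [hdydef]
    have hcancel : (i:ℝ) * (b - a) / 2 ^ k * 2 ^ k = i * (b - a) := by field_simp
    nlinarith
  have h1 : h t ≤ h dy + K * ((b - a) / 2 ^ k) := by
    have hlt := hlip t ht dy hdymem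
    have habs : |t - dy| ≤ (b - a) / 2 ^ k := by
      rw [abs_of_nonneg (by linarith)]; exact htdy
    have h2 := (abs_le.mp hlt).2
    nlinarith [mul_le_mul_of_nonneg_left habs hK]
  have h2 : h dy ≤ ℓ dy := key k i hik
  have h3 : ℓ dy ≤ ℓ t + |h b - h a| / 2 ^ k := by
    have hX : ℓ dy - ℓ t = ((dy - t) / (b - a)) * (h b - h a) := by
      simp only [hℓ]; ring
    have habsX : |((dy - t) / (b - a)) * (h b - h a)| ≤ |h b - h a| / 2 ^ k := by
      rw [abs_mul, abs_div, abs_of_pos hba]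
      have h4 : |dy - t| ≤ (b - a) / 2 ^ k := by
        rw [abs_sub_comm, abs_of_nonneg (by linarith)]; exact htdy
      have h5 : |dy - t| / (b - a) ≤ 1 / 2 ^ k := by
        rw [div_le_div_iff₀ hba h2k]
        calc |dy - t| * 2 ^ k ≤ ((b - a) / 2 ^ k) * 2 ^ k := by
              exact mul_le_mul_of_nonneg_right h4 h2k.le
          _ = 1 * (b - a) := by field_simp
      calc |dy - t| / (b - a) * |h b - h a| ≤ (1 / 2 ^ k) * |h b - h a| :=
            mul_le_mul_of_nonneg_right h5 (abs_nonneg _)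
        _ = |h b - h a| / 2 ^ k := by ring
    have := le_abs_self (((dy - t) / (b - a)) * (h b - h a))
    linarith
  have hfin : (K * (b - a) + |h b - h a|) / 2 ^ k < ε := by
    rw [div_lt_iff₀ h2k]
    have := (div_lt_iff₀ hε).mp hk
    nlinarith
  have : K * ((b - a) / 2 ^ k) + |h b - h a| / 2 ^ k = (K * (b - a) + |h b - h a|) / 2 ^ k := by
    ring
  simp only [hℓ] at h2 h3
  clear_value dy
  have hG : h t ≤ (h a + (t - a) / (b - a) * (h b - h a)) + (K * (b - a) + |h b - h a|) / 2 ^ k := by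
    have e : K * ((b - a) / 2 ^ k) + |h b - h a| / 2 ^ k = (K * (b - a) + |h b - h a|) / 2 ^ k := by
      ring
    linarith
  linarith

section AuxCAT
variable {X : Type*} [MetricSpace X]

lemma translationLength_le' (g : X ≃ᵢ X) (x : X) : translationLength g ≤ dist x (g x) :=
  ciInf_le ⟨0, by rintro _ ⟨y, rfl⟩; exact dist_nonneg⟩ x

lemma exists_midpoint' (hX : CAT0 X) (x y : X) :
    ∃ m : X, dist x m = dist x y / 2 ∧ dist y m = dist x y / 2 := by
  obtain ⟨γ, h0, hd, hgeo⟩ := hX.1 x y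
  have hxy : (0:ℝ) ≤ dist x y := dist_nonneg
  have hm : dist x y / 2 ∈ Set.Icc 0 (dist x y) := ⟨by linarith, by linarith⟩
  have h0m : (0:ℝ) ∈ Set.Icc 0 (dist x y) := ⟨le_refl _, hxy⟩
  have hdm : dist x y ∈ Set.Icc 0 (dist x y) := ⟨hxy, le_refl _⟩
  refine ⟨γ (dist x y / 2), ?_, ?_⟩
  · have h := hgeo 0 h0m (dist x y / 2) hm
    rw [h0] at h; rw [h, abs_of_nonpos (by linarith)]; ring
  · have h := hgeo (dist x y) hdm (dist x y / 2) hm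
    rw [hd] at h; rw [h, abs_of_nonneg (by linarith)]; ring

lemma midpoint_contract (hX : CAT0 X) {x y z m₁ m₂ : X}
    (h1x : dist x m₁ = dist x y / 2) (h1y : dist y m₁ = dist x y / 2)
    (h2x : dist x m₂ = dist x z / 2) (h2z : dist z m₂ = dist x z / 2) :
    dist m₁ m₂ ≤ dist y z / 2 := by
  have cn1 := hX.2 m₁ x z m₂ h2x h2z
  have cn2 := hX.2 z x y m₁ h1x h1y
  have e1 : dist m₁ x = dist x y / 2 := by rw [dist_comm]; exact h1x
  have e2 : dist m₁ z = dist z m₁ := dist_comm _ _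
  have e3 : dist z x = dist x z := dist_comm _ _
  have e4 : dist z y = dist y z := dist_comm _ _
  rw [e1, e2] at cn1
  rw [e3, e4] at cn2
  -- cn1 : dist m₁ m₂ ^ 2 ≤ ((dist x y / 2) ^ 2 + dist z m₁ ^ 2) / 2 - dist x z ^ 2 / 4
  -- cn2 : dist z m₁ ^ 2 ≤ (dist x z ^ 2 + dist y z ^ 2) / 2 - dist x y ^ 2 / 4
  have hsq : dist m₁ m₂ ^ 2 ≤ (dist y z / 2) ^ 2 := by nlinarith
  have h1 : (0:ℝ) ≤ dist m₁ m₂ := dist_nonneg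
  have h2 : (0:ℝ) ≤ dist y z / 2 := by positivity
  nlinarith

lemma dist_midpoint_convex (hX : CAT0 X) {γ σ : ℝ → X} {a b : ℝ}
    (hγ : ∀ u ∈ Set.Icc a b, ∀ v ∈ Set.Icc a b, dist (γ u) (γ v) = |u - v|)
    (hσ : ∀ u ∈ Set.Icc a b, ∀ v ∈ Set.Icc a b, dist (σ u) (σ v) = |u - v|)
    (hab : a ≤ b) :
    dist (γ ((a + b) / 2)) (σ ((a + b) / 2))
      ≤ (dist (γ a) (σ a) + dist (γ b) (σ b)) / 2 := by
  obtain ⟨m, hm1, hm2⟩ := exists_midpoint' hX (γ a) (σ b)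
  have hmm : (a + b) / 2 ∈ Set.Icc a b := ⟨by linarith, by linarith⟩
  have ham : a ∈ Set.Icc a b := ⟨le_refl _, hab⟩
  have hbm : b ∈ Set.Icc a b := ⟨hab, le_refl _⟩
  have hγab : dist (γ a) (γ b) = b - a := by
    rw [hγ a ham b hbm, abs_of_nonpos (by linarith)]; ring
  have hσab : dist (σ a) (σ b) = b - a := by
    rw [hσ a ham b hbm, abs_of_nonpos (by linarith)]; ring
  have h1 : dist (γ a) (γ ((a + b) / 2)) = dist (γ a) (γ b) / 2 := by
    rw [hγ a ham _ hmm, hγab, abs_of_nonpos (by linarith)]; ring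
  have h2 : dist (γ b) (γ ((a + b) / 2)) = dist (γ a) (γ b) / 2 := by
    rw [hγ b hbm _ hmm, hγab, abs_of_nonneg (by linarith)]; ring
  have h3 : dist (σ b) (σ ((a + b) / 2)) = dist (σ b) (σ a) / 2 := by
    rw [hσ b hbm _ hmm, dist_comm (σ b) (σ a), hσab, abs_of_nonneg (by linarith)]; ring
  have h4 : dist (σ a) (σ ((a + b) / 2)) = dist (σ b) (σ a) / 2 := by
    rw [hσ a ham _ hmm, dist_comm (σ b) (σ a), hσab, abs_of_nonpos (by linarith)]; ring
  have A : dist (γ ((a + b) / 2)) m ≤ dist (γ b) (σ b) / 2 :=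
    midpoint_contract hX h1 h2 hm1 hm2
  have hm1' : dist (σ b) m = dist (σ b) (γ a) / 2 := by
    rw [dist_comm (σ b) (γ a)]; exact hm2
  have hm2' : dist (γ a) m = dist (σ b) (γ a) / 2 := by
    rw [dist_comm (σ b) (γ a)]; exact hm1
  have B : dist m (σ ((a + b) / 2)) ≤ dist (γ a) (σ a) / 2 := by
    have := midpoint_contract hX hm1' hm2' h3 h4
    -- this : dist m (σ ((a+b)/2)) ≤ dist (γ a) (σ a) / 2
    exact this
  calc dist (γ ((a + b) / 2)) (σ ((a + b) / 2))
      ≤ dist (γ ((a + b) / 2)) m + dist m (σ ((a + b) / 2)) := dist_triangle _ _ _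
    _ ≤ dist (γ b) (σ b) / 2 + dist (γ a) (σ a) / 2 := add_le_add A B
    _ = (dist (γ a) (σ a) + dist (γ b) (σ b)) / 2 := by ring

lemma dist_pair_midconvex (hX : CAT0 X) {γ σ : ℝ → X} {a b : ℝ}
    (hγ : ∀ u ∈ Set.Icc a b, ∀ v ∈ Set.Icc a b, dist (γ u) (γ v) = |u - v|)
    (hσ : ∀ u ∈ Set.Icc a b, ∀ v ∈ Set.Icc a b, dist (σ u) (σ v) = |u - v|) :
    ∀ s ∈ Set.Icc a b, ∀ t ∈ Set.Icc a b,
      dist (γ ((s + t) / 2)) (σ ((s + t) / 2))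
        ≤ (dist (γ s) (σ s) + dist (γ t) (σ t)) / 2 := by
  intro s hs t ht
  rcases le_total s t with hst | hst
  · have hsub : Set.Icc s t ⊆ Set.Icc a b := Set.Icc_subset_Icc hs.1 ht.2
    exact dist_midpoint_convex hX
      (fun u hu v hv => hγ u (hsub hu) v (hsub hv))
      (fun u hu v hv => hσ u (hsub hu) v (hsub hv)) hst
  · have hsub : Set.Icc t s ⊆ Set.Icc a b := Set.Icc_subset_Icc ht.1 hs.2
    have := dist_midpoint_convex hX
      (fun u hu v hv => hγ u (hsub hu) v (hsub hv))
      (fun u hu v hv => hσ u (hsub hu) v (hsub hv)) hst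
    rw [add_comm t s] at this
    linarith

lemma dist_pair_lip {γ σ : ℝ → X} {a b : ℝ}
    (hγ : ∀ u ∈ Set.Icc a b, ∀ v ∈ Set.Icc a b, dist (γ u) (γ v) = |u - v|)
    (hσ : ∀ u ∈ Set.Icc a b, ∀ v ∈ Set.Icc a b, dist (σ u) (σ v) = |u - v|) :
    ∀ s ∈ Set.Icc a b, ∀ t ∈ Set.Icc a b,
      |dist (γ s) (σ s) - dist (γ t) (σ t)| ≤ 2 * |s - t| := by
  intro s hs t ht
  have h1 : |dist (γ s) (σ s) - dist (γ t) (σ s)| ≤ dist (γ s) (γ t) :=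
    abs_dist_sub_le _ _ _
  have h2 : |dist (γ t) (σ s) - dist (γ t) (σ t)| ≤ dist (σ s) (σ t) := by
    rw [dist_comm (γ t) (σ s), dist_comm (γ t) (σ t)]
    exact abs_dist_sub_le _ _ _
  have h3 := abs_sub_le (dist (γ s) (σ s)) (dist (γ t) (σ s)) (dist (γ t) (σ t))
  rw [hγ s hs t ht] at h1
  rw [hσ s hs t ht] at h2
  linarith

end AuxCAT

section AuxMain
variable {X : Type*} [MetricSpace X]

lemma ray_in_minSet (hX : CAT0 X) (g : X ≃ᵢ X) {x₀ : X}
    (hx₀ : dist x₀ (g x₀) = translationLength g)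
    {ξ : ℝ → X} (hξ : GeodesicRay ξ) (h0 : ξ 0 = x₀)
    (hasym : Asymptotic ξ (fun t => g (ξ t))) :
    ∀ t : ℝ, 0 ≤ t → dist (ξ t) (g (ξ t)) = translationLength g := by
  obtain ⟨N, hN⟩ := hasym
  have hlow : ∀ x : X, translationLength g ≤ dist x (g x) := translationLength_le' g
  have hf0 : dist (ξ 0) (g (ξ 0)) = translationLength g := by rw [h0]; exact hx₀
  have hmc : ∀ t : ℝ, 0 ≤ t →
      dist (ξ t) (g (ξ t)) ≤ (dist (ξ 0) (g (ξ 0)) + dist (ξ (2*t)) (g (ξ (2*t)))) / 2 := by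
    intro t ht
    have hγ : ∀ u ∈ Set.Icc (0:ℝ) (2*t), ∀ v ∈ Set.Icc (0:ℝ) (2*t),
        dist (ξ u) (ξ v) = |u - v| := fun u hu v hv => hξ u v hu.1 hv.1
    have hσ : ∀ u ∈ Set.Icc (0:ℝ) (2*t), ∀ v ∈ Set.Icc (0:ℝ) (2*t),
        dist (g (ξ u)) (g (ξ v)) = |u - v| := by
      intro u hu v hv
      rw [g.dist_eq]
      exact hξ u v hu.1 hv.1
    have h2t : (2*t) ∈ Set.Icc (0:ℝ) (2*t) := ⟨by linarith, le_refl _⟩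
    have h0t : (0:ℝ) ∈ Set.Icc (0:ℝ) (2*t) := ⟨le_refl _, by linarith⟩
    have := dist_pair_midconvex hX (γ := ξ) (σ := fun u => g (ξ u)) hγ hσ 0 h0t (2*t) h2t
    have e : ((0:ℝ) + 2*t) / 2 = t := by ring
    rw [e] at this
    exact this
  intro t ht
  refine le_antisymm ?_ (hlow _)
  by_contra hgt
  push_neg at hgt
  set L := translationLength g with hL
  set ε := dist (ξ t) (g (ξ t)) - L with hε
  have hεpos : 0 < ε := by simp only [hε]; linarith
  have key : ∀ n : ℕ, L + 2 ^ n * ε ≤ dist (ξ (2 ^ n * t)) (g (ξ (2 ^ n * t))) := by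
    intro n
    induction n with
    | zero => simp only [pow_zero, one_mul, hε]; linarith
    | succ n ihn =>
      have hpos : (0:ℝ) ≤ 2 ^ n * t := by positivity
      have := hmc (2 ^ n * t) hpos
      rw [hf0] at this
      have e : 2 * (2 ^ n * t) = 2 ^ (n+1) * t := by ring
      rw [e] at this
      have e2 : (2:ℝ) ^ (n+1) * ε = 2 * (2 ^ n * ε) := by ring
      rw [e2]
      linarith
  obtain ⟨n, hn⟩ := pow_unbounded_of_one_lt ((N - L) / ε) one_lt_two
  have hn' : N - L < 2 ^ n * ε := by
    have := (div_lt_iff₀ hεpos).mp hn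
    nlinarith
  have hbd := hN (2 ^ n * t) (by positivity)
  have := key n
  simp only at hbd
  linarith

end AuxMain

section AuxRay
variable {X : Type*} [MetricSpace X]

open Filter Topology

lemma exists_ray_from (hX : CAT0 X) [ProperSpace X] {ξ : ℝ → X} (hξ : GeodesicRay ξ)
    (x₀ : X) : ∃ ζ : ℝ → X, GeodesicRay ζ ∧ ζ 0 = x₀ ∧ Asymptotic ζ ξ := by
  classical
  set C := dist x₀ (ξ 0) with hC
  have hC0 : 0 ≤ C := dist_nonneg
  set d : ℕ → ℝ := fun n => dist x₀ (ξ n) with hd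
  have hd0 : ∀ n, 0 ≤ d n := fun n => dist_nonneg
  have hξd : ∀ s t : ℝ, 0 ≤ s → s ≤ t → dist (ξ s) (ξ t) = t - s := by
    intro s t hs hst
    rw [hξ s t hs (le_trans hs hst), abs_of_nonpos (by linarith)]; ring
  have hdub : ∀ n : ℕ, d n ≤ n + C := by
    intro n
    calc d n ≤ dist x₀ (ξ 0) + dist (ξ 0) (ξ n) := dist_triangle _ _ _
      _ = C + ((n:ℝ) - 0) := by rw [hξd 0 n le_rfl (Nat.cast_nonneg n)]
      _ = n + C := by ring
  have hdlb : ∀ n : ℕ, (n:ℝ) - C ≤ d n := by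
    intro n
    have h := dist_triangle (ξ 0) x₀ (ξ n)
    rw [dist_comm (ξ 0) x₀] at h
    have h2 : dist (ξ 0) (ξ n) = (n:ℝ) - 0 := hξd 0 n le_rfl (Nat.cast_nonneg n)
    rw [h2] at h
    linarith
  choose γ hγ0 hγd hγgeo using fun n : ℕ => hX.1 x₀ (ξ n)
  have hγgeo' : ∀ n : ℕ, ∀ u ∈ Set.Icc (0:ℝ) (d n), ∀ v ∈ Set.Icc (0:ℝ) (d n),
      dist (γ n u) (γ n v) = |u - v| := fun n => hγgeo n
  have hγdist : ∀ n : ℕ, ∀ u ∈ Set.Icc (0:ℝ) (d n), dist (γ n u) x₀ = u := by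
    intro n u hu
    have h := hγgeo' n u hu 0 ⟨le_rfl, hd0 n⟩
    rw [hγ0 n] at h
    rw [h, abs_of_nonneg (by linarith [hu.1] : (0:ℝ) ≤ u - 0)]
    ring
  -- Estimate A
  have estA : ∀ n : ℕ, ∀ s ∈ Set.Icc (max 0 (d n - n)) (d n),
      dist (γ n s) (ξ (s + ((n:ℝ) - d n))) ≤ 2 * C := by
    intro n s hs
    have hs₀0 : (0:ℝ) ≤ max 0 (d n - n) := le_max_left _ _
    have hs₀r : d n - n ≤ max 0 (d n - n) := le_max_right _ _
    have hs₀dn : max 0 (d n - n) ≤ d n :=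
      max_le (hd0 n) (by linarith [Nat.cast_nonneg (α := ℝ) n])
    have hs₀C : max 0 (d n - n) ≤ C := max_le hC0 (by linarith [hdub n])
    have hσgeo : ∀ u ∈ Set.Icc (max 0 (d n - n)) (d n), ∀ v ∈ Set.Icc (max 0 (d n - n)) (d n),
        dist (ξ (u + ((n:ℝ) - d n))) (ξ (v + ((n:ℝ) - d n))) = |u - v| := by
      intro u hu v hv
      have hu' : 0 ≤ u + ((n:ℝ) - d n) := by linarith [hu.1]
      have hv' : 0 ≤ v + ((n:ℝ) - d n) := by linarith [hv.1]
      rw [hξ _ _ hu' hv']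
      congr 1
      ring
    have hγr : ∀ u ∈ Set.Icc (max 0 (d n - n)) (d n), ∀ v ∈ Set.Icc (max 0 (d n - n)) (d n),
        dist (γ n u) (γ n v) = |u - v| := by
      intro u hu v hv
      exact hγgeo' n u ⟨le_trans hs₀0 hu.1, hu.2⟩ v ⟨le_trans hs₀0 hv.1, hv.2⟩
    have hend : dist (γ n (d n)) (ξ (d n + ((n:ℝ) - d n))) = 0 := by
      have e : d n + ((n:ℝ) - d n) = (n:ℝ) := by ring
      rw [e, hγd n, dist_self]
    have hstart : dist (γ n (max 0 (d n - n))) (ξ (max 0 (d n - n) + ((n:ℝ) - d n))) ≤ 2 * C := by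
      have h1 : dist (γ n (max 0 (d n - n))) x₀ = max 0 (d n - n) :=
        hγdist n _ ⟨hs₀0, hs₀dn⟩
      have h2 : dist (ξ 0) (ξ (max 0 (d n - n) + ((n:ℝ) - d n)))
          = max 0 (d n - n) + ((n:ℝ) - d n) := by
        rw [hξd 0 _ le_rfl (by linarith)]; ring
      have h4 : 2 * max 0 (d n - n) + ((n:ℝ) - d n) ≤ C := by
        rcases le_or_gt (d n - n) 0 with hc | hc
        · rw [max_eq_left hc]
          have := hdlb n
          linarith
        · rw [max_eq_right hc.le]
          have := hdub n
          linarith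
      calc dist (γ n (max 0 (d n - n))) (ξ (max 0 (d n - n) + ((n:ℝ) - d n)))
          ≤ dist (γ n (max 0 (d n - n))) x₀ + dist x₀ (ξ 0)
            + dist (ξ 0) (ξ (max 0 (d n - n) + ((n:ℝ) - d n))) := dist_triangle4 _ _ _ _
        _ = max 0 (d n - n) + C + (max 0 (d n - n) + ((n:ℝ) - d n)) := by rw [h1, h2]
        _ ≤ 2 * C := by linarith
    rcases eq_or_lt_of_le hs₀dn with heq | hlt
    · have hs' : s = d n := le_antisymm hs.2 (heq ▸ hs.1)
      rw [hs', hend]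
      linarith
    · have hmc := dist_pair_midconvex hX hγr hσgeo
      have hlip := dist_pair_lip hγr hσgeo
      have hint : dist (γ n s) (ξ (s + ((n:ℝ) - d n)))
          ≤ dist (γ n (max 0 (d n - n))) (ξ (max 0 (d n - n) + ((n:ℝ) - d n)))
            + (s - max 0 (d n - n)) / (d n - max 0 (d n - n))
              * (dist (γ n (d n)) (ξ (d n + ((n:ℝ) - d n)))
                 - dist (γ n (max 0 (d n - n))) (ξ (max 0 (d n - n) + ((n:ℝ) - d n)))) :=
        midconvex_interp (h := fun u => dist (γ n u) (ξ (u + ((n:ℝ) - d n)))) hlt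
          (by norm_num) hmc hlip s hs
      rw [hend] at hint
      have hlam0 : 0 ≤ (s - max 0 (d n - n)) / (d n - max 0 (d n - n)) :=
        div_nonneg (by linarith [hs.1]) (by linarith)
      have hst0 : 0 ≤ dist (γ n (max 0 (d n - n))) (ξ (max 0 (d n - n) + ((n:ℝ) - d n))) :=
        dist_nonneg
      nlinarith [hstart]
  -- Estimate A' : asymptotic bound
  have estA' : ∀ n : ℕ, ∀ t ∈ Set.Icc (0:ℝ) (d n), dist (γ n t) (ξ t) ≤ 3 * C := by
    intro n t ht
    have habs : |(n:ℝ) - d n| ≤ C := by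
      rw [abs_le]
      constructor
      · linarith [hdub n]
      · linarith [hdlb n]
    rcases le_or_gt (max 0 (d n - n)) t with hc | hc
    · have h1 := estA n t ⟨hc, ht.2⟩
      have h2 : dist (ξ (t + ((n:ℝ) - d n))) (ξ t) = |(n:ℝ) - d n| := by
        have h3 : 0 ≤ t + ((n:ℝ) - d n) := by
          have := le_max_right 0 (d n - n)
          linarith
        rw [hξ _ _ h3 ht.1]
        congr 1
        ring
      calc dist (γ n t) (ξ t) ≤ dist (γ n t) (ξ (t + ((n:ℝ) - d n)))
            + dist (ξ (t + ((n:ℝ) - d n))) (ξ t) := dist_triangle _ _ _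
        _ ≤ 2 * C + C := add_le_add h1 (by rw [h2]; exact habs)
        _ = 3 * C := by ring
    · have htC : t ≤ C := by
        have := max_le (hd0 n) (by linarith [Nat.cast_nonneg (α := ℝ) n] : d n - (n:ℝ) ≤ d n)
        have h5 : max 0 (d n - n) ≤ C := max_le hC0 (by linarith [hdub n])
        linarith
      have h1 : dist (γ n t) x₀ = t := hγdist n t ht
      have h2 : dist (ξ 0) (ξ t) = t - 0 := hξd 0 t le_rfl ht.1
      calc dist (γ n t) (ξ t) ≤ dist (γ n t) x₀ + dist x₀ (ξ 0) + dist (ξ 0) (ξ t) :=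
            dist_triangle4 _ _ _ _
        _ = t + C + (t - 0) := by rw [h1, h2]
        _ ≤ 3 * C := by linarith
  -- Estimate B : endpoint comparison
  have estB : ∀ n m : ℕ, 2 * C ≤ (n:ℝ) → 2 * C ≤ (m:ℝ) → d n ≤ d m →
      dist (γ n (d n)) (γ m (d n)) ≤ 4 * C := by
    intro n m hn hm hnm
    have hdnC : C ≤ d n := by linarith [hdlb n]
    have h1 : dist (γ m (d n)) (ξ (d n + ((m:ℝ) - d m))) ≤ 2 * C := by
      apply estA m (d n) ⟨max_le (hd0 n) (by linarith [hdub m]), hnm⟩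
    have habsn : |(n:ℝ) - d n| ≤ C := by
      rw [abs_le]; exact ⟨by linarith [hdub n], by linarith [hdlb n]⟩
    have habsm : |(m:ℝ) - d m| ≤ C := by
      rw [abs_le]; exact ⟨by linarith [hdub m], by linarith [hdlb m]⟩
    have h2 : dist (ξ (d n + ((m:ℝ) - d m))) (ξ n) ≤ 2 * C := by
      have h3 : 0 ≤ d n + ((m:ℝ) - d m) := by
        have := abs_le.mp habsm
        linarith
      rw [hξ _ _ h3 (Nat.cast_nonneg n)]
      have : |d n + ((m:ℝ) - d m) - n| ≤ |(m:ℝ) - d m| + |(n:ℝ) - d n| := by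
        have e : d n + ((m:ℝ) - d m) - n = ((m:ℝ) - d m) - ((n:ℝ) - d n) := by ring
        rw [e]
        exact abs_sub (_ : ℝ) _
      linarith
    calc dist (γ n (d n)) (γ m (d n)) = dist (ξ n) (γ m (d n)) := by rw [hγd n]
      _ ≤ dist (ξ n) (ξ (d n + ((m:ℝ) - d m))) + dist (ξ (d n + ((m:ℝ) - d m))) (γ m (d n)) :=
          dist_triangle _ _ _
      _ ≤ 2 * C + 2 * C := by
          rw [dist_comm (ξ (n:ℝ)) (ξ (d n + ((m:ℝ) - d m))),
            dist_comm (ξ (d n + ((m:ℝ) - d m))) (γ m (d n))]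
          exact add_le_add h2 h1
      _ = 4 * C := by ring
  -- Estimate C : Cauchy bound
  have estC : ∀ n m : ℕ, 2 * C ≤ (n:ℝ) → 2 * C ≤ (m:ℝ) → ∀ t : ℝ, 0 ≤ t →
      t ≤ min (d n) (d m) → 0 < min (d n) (d m) →
      dist (γ n t) (γ m t) ≤ 4 * C * t / min (d n) (d m) := by
    intro n m hn hm t ht htb hb
    set b := min (d n) (d m) with hbdef
    have hbn : b ≤ d n := min_le_left _ _
    have hbm : b ≤ d m := min_le_right _ _
    have hγn : ∀ u ∈ Set.Icc (0:ℝ) b, ∀ v ∈ Set.Icc (0:ℝ) b,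
        dist (γ n u) (γ n v) = |u - v| := fun u hu v hv =>
      hγgeo' n u ⟨hu.1, le_trans hu.2 hbn⟩ v ⟨hv.1, le_trans hv.2 hbn⟩
    have hγm : ∀ u ∈ Set.Icc (0:ℝ) b, ∀ v ∈ Set.Icc (0:ℝ) b,
        dist (γ m u) (γ m v) = |u - v| := fun u hu v hv =>
      hγgeo' m u ⟨hu.1, le_trans hu.2 hbm⟩ v ⟨hv.1, le_trans hv.2 hbm⟩
    have hmc := dist_pair_midconvex hX hγn hγm
    have hlip := dist_pair_lip hγn hγm
    have h00 : dist (γ n 0) (γ m 0) = 0 := by rw [hγ0 n, hγ0 m, dist_self]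
    have hint : dist (γ n t) (γ m t)
        ≤ dist (γ n 0) (γ m 0) + (t - 0) / (b - 0)
          * (dist (γ n b) (γ m b) - dist (γ n 0) (γ m 0)) :=
      midconvex_interp (h := fun u => dist (γ n u) (γ m u)) hb (by norm_num) hmc hlip t ⟨ht, htb⟩
    rw [h00] at hint
    have hendb : dist (γ n b) (γ m b) ≤ 4 * C := by
      rcases le_total (d n) (d m) with hc | hc
      · have hb' : b = d n := min_eq_left hc
        rw [hb']
        exact estB n m hn hm hc
      · have hb' : b = d m := min_eq_right hc
        rw [hb', dist_comm]
        exact estB m n hm hn hc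
    have hlam : 0 ≤ t / b := div_nonneg ht hb.le
    calc dist (γ n t) (γ m t) ≤ 0 + (t - 0) / (b - 0) * (dist (γ n b) (γ m b) - 0) := hint
      _ = t / b * dist (γ n b) (γ m b) := by ring
      _ ≤ t / b * (4 * C) := by
          apply mul_le_mul_of_nonneg_left hendb
          simpa using hlam
      _ = 4 * C * t / b := by ring
  -- Cauchy sequences and limits
  have hex : ∀ t : ℝ, ∃ y : X,
      Tendsto (fun n : ℕ => γ n (min (max t 0) (d n))) atTop (𝓝 y) := by
    intro t
    apply cauchySeq_tendsto_of_complete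
    rw [Metric.cauchySeq_iff']
    intro ε hε
    set t' := max t 0 with ht'def
    have ht'0 : 0 ≤ t' := le_max_right _ _
    obtain ⟨Nr, hNr⟩ := exists_nat_gt (max (max (2*C) (t' + C + 1)) ((4*C*t')/ε + C))
    have hNrC : 2*C ≤ (Nr:ℝ) := le_of_lt (lt_of_le_of_lt (le_trans (le_max_left _ _) (le_max_left _ _)) hNr)
    have hNrt : t' + C + 1 ≤ (Nr:ℝ) := le_of_lt (lt_of_le_of_lt (le_trans (le_max_right _ _) (le_max_left _ _)) hNr)
    have hNre : (4*C*t')/ε + C < (Nr:ℝ) := lt_of_le_of_lt (le_max_right _ _) hNr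
    refine ⟨Nr, fun n hn => ?_⟩
    have hnN : (Nr:ℝ) ≤ (n:ℝ) := Nat.cast_le.mpr hn
    have hdn : t' < d n := by linarith [hdlb n]
    have hdN : t' < d Nr := by linarith [hdlb Nr]
    have hmn : min t' (d n) = t' := min_eq_left hdn.le
    have hmN : min t' (d Nr) = t' := min_eq_left hdN.le
    rw [hmn, hmN]
    have hbpos : 0 < min (d n) (d Nr) := lt_min (by linarith) (by linarith)
    have hbge : (Nr:ℝ) - C ≤ min (d n) (d Nr) :=
      le_min (by linarith [hdlb n]) (by linarith [hdlb Nr])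
    have h1 := estC n Nr (by linarith) hNrC t' ht'0 (le_min hdn.le hdN.le) hbpos
    have hNrCpos : 0 < (Nr:ℝ) - C := by linarith
    have h2 : 4 * C * t' / min (d n) (d Nr) ≤ 4 * C * t' / ((Nr:ℝ) - C) := by
      gcongr
    have h3 : 4 * C * t' / ((Nr:ℝ) - C) < ε := by
      rw [div_lt_iff₀ hNrCpos]
      have h4 : 4*C*t'/ε < (Nr:ℝ) - C := by linarith
      rw [div_lt_iff₀ hε] at h4
      nlinarith
    calc dist (γ n t') (γ Nr t') ≤ 4 * C * t' / min (d n) (d Nr) := h1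
      _ ≤ 4 * C * t' / ((Nr:ℝ) - C) := h2
      _ < ε := h3
  choose ζ hζ using hex
  have hray : GeodesicRay ζ := by
    intro s t hs ht
    have hs' : max s 0 = s := max_eq_left hs
    have ht' : max t 0 = t := max_eq_left ht
    have h1 : Tendsto (fun n : ℕ =>
        dist (γ n (min s (d n))) (γ n (min t (d n)))) atTop (𝓝 (dist (ζ s) (ζ t))) := by
      have := (hζ s).dist (hζ t)
      rw [hs', ht'] at this
      exact this
    obtain ⟨N₀, hN₀⟩ := exists_nat_gt (max s t + C)
    have h2 : ∀ᶠ n : ℕ in atTop, dist (γ n (min s (d n))) (γ n (min t (d n))) = |s - t| := by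
      rw [eventually_atTop]
      refine ⟨N₀, fun n hn => ?_⟩
      have hnN : (N₀:ℝ) ≤ (n:ℝ) := Nat.cast_le.mpr hn
      have hsd : s ≤ d n := by
        have := hdlb n
        have : max s t + C < (n:ℝ) := lt_of_lt_of_le hN₀ hnN
        linarith [le_max_left s t, hdlb n]
      have htd : t ≤ d n := by
        have : max s t + C < (n:ℝ) := lt_of_lt_of_le hN₀ hnN
        linarith [le_max_right s t, hdlb n]
      rw [min_eq_left hsd, min_eq_left htd]
      exact hγgeo' n s ⟨hs, hsd⟩ t ⟨ht, htd⟩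
    have h3 : Tendsto (fun n : ℕ =>
        dist (γ n (min s (d n))) (γ n (min t (d n)))) atTop (𝓝 |s - t|) :=
      Tendsto.congr' (h2.mono fun n hn => hn.symm) tendsto_const_nhds
    exact tendsto_nhds_unique h1 h3
  have hz0 : ζ 0 = x₀ := by
    have h1 := hζ 0
    have h2 : (fun n : ℕ => γ n (min (max (0:ℝ) 0) (d n))) = fun _ => x₀ := by
      funext n
      rw [max_self, min_eq_left (hd0 n), hγ0 n]
    rw [h2] at h1
    exact tendsto_nhds_unique h1 tendsto_const_nhds
  refine ⟨ζ, hray, hz0, ⟨3 * C, fun t ht => ?_⟩⟩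
  have h1 : Tendsto (fun n : ℕ => dist (γ n (min t (d n))) (ξ t)) atTop
      (𝓝 (dist (ζ t) (ξ t))) := by
    have h0 : Tendsto (fun n : ℕ => dist (γ n (min (max t 0) (d n))) (ξ t)) atTop
        (𝓝 (dist (ζ t) (ξ t))) := (hζ t).dist tendsto_const_nhds
    rw [max_eq_left ht] at h0
    exact h0
  apply le_of_tendsto h1
  obtain ⟨N₀, hN₀⟩ := exists_nat_gt (t + C)
  rw [eventually_atTop]
  refine ⟨N₀, fun n hn => ?_⟩
  have hnN : (N₀:ℝ) ≤ (n:ℝ) := Nat.cast_le.mpr hn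
  have htd : t ≤ d n := by linarith [hdlb n]
  rw [min_eq_left htd]
  exact estA' n t ⟨ht, htd⟩

end AuxRay


/-- For a hyperbolic isometry `g` of a proper CAT(0) space and
`x₀ ∈ Min(g)`: a ray `ξ` from `x₀` is asymptotic to `g ∘ ξ` iff its image lies in
`Min(g)`; consequently the fixed-point set of `g` in `∂X` equals `∂Min(g)`. -/
theorem fixedSet_eq_boundary_minSet {X : Type*} [MetricSpace X] [ProperSpace X]
    (hX : CAT0 X) (g : X ≃ᵢ X) (hg : IsHyperbolic g)
    (x₀ : X) (hx₀ : x₀ ∈ minSet g) :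
    (∀ ξ : Ray X, ξ.1 0 = x₀ →
      (Asymptotic ξ.1 (fun t => g (ξ.1 t)) ↔ ∀ t : ℝ, 0 ≤ t → ξ.1 t ∈ minSet g)) ∧
    {α : Boundary X | boundaryMap g α = α} = subBoundary (minSet g) := by
  have hx₀' : dist x₀ (g x₀) = translationLength g := hx₀
  have part1 : ∀ ξ : Ray X, ξ.1 0 = x₀ →
      (Asymptotic ξ.1 (fun t => g (ξ.1 t)) ↔ ∀ t : ℝ, 0 ≤ t → ξ.1 t ∈ minSet g) := by
    intro ξ h0
    constructor
    · intro ha t ht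
      exact ray_in_minSet hX g hx₀' ξ.2 h0 ha t ht
    · intro hmem
      exact ⟨translationLength g, fun t ht => le_of_eq (hmem t ht)⟩
  refine ⟨part1, ?_⟩
  ext α
  simp only [Set.mem_setOf_eq]
  constructor
  · intro hfix
    obtain ⟨ξ, hξα⟩ := Quotient.exists_rep α
    have hmap : boundaryMap g (Quotient.mk (raySetoid X) ξ)
        = Quotient.mk (raySetoid X) (rayMap g ξ) := rfl
    have heq : Quotient.mk (raySetoid X) (rayMap g ξ) = Quotient.mk (raySetoid X) ξ := by
      rw [← hmap, hξα, hfix]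
    have hasym : Asymptotic (fun t => g (ξ.1 t)) ξ.1 := Quotient.exact heq
    obtain ⟨N₂, hN₂⟩ := hasym
    obtain ⟨ζ, hζray, hζ0, hζξ⟩ := exists_ray_from hX ξ.2 x₀
    obtain ⟨N₁, hN₁⟩ := hζξ
    have hζasym : Asymptotic ζ (fun t => g (ζ t)) := by
      refine ⟨N₁ + N₂ + N₁, fun t ht => ?_⟩
      have e1 : dist (g (ξ.1 t)) (g (ζ t)) = dist (ξ.1 t) (ζ t) := g.dist_eq _ _
      have h2 := hN₂ t ht
      have h3 := hN₁ t ht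
      calc dist (ζ t) (g (ζ t))
          ≤ dist (ζ t) (ξ.1 t) + dist (ξ.1 t) (g (ξ.1 t)) + dist (g (ξ.1 t)) (g (ζ t)) :=
            dist_triangle4 _ _ _ _
        _ ≤ N₁ + N₂ + N₁ := by
            rw [e1]
            have h4 : dist (ξ.1 t) (g (ξ.1 t)) ≤ N₂ := by rw [dist_comm]; exact h2
            have h6 : dist (ξ.1 t) (ζ t) ≤ N₁ := by rw [dist_comm]; exact h3
            linarith
    have hmem := ray_in_minSet hX g hx₀' hζray hζ0 hζasym
    refine ⟨⟨ζ, hζray⟩, fun t ht => hmem t ht, ?_⟩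
    exact Eq.trans (Quotient.sound ⟨N₁, hN₁⟩) hξα
  · rintro ⟨ξ, hmem, hξα⟩
    rw [← hξα]
    have hmap : boundaryMap g (Quotient.mk (raySetoid X) ξ)
        = Quotient.mk (raySetoid X) (rayMap g ξ) := rfl
    rw [hmap]
    apply Quotient.sound
    refine ⟨translationLength g, fun t ht => ?_⟩
    have h1 : dist (ξ.1 t) (g (ξ.1 t)) = translationLength g := hmem t ht
    have : dist (g (ξ.1 t)) (ξ.1 t) = translationLength g := by rw [dist_comm]; exact h1
    exact le_of_eq this
end

section
/- Let a group G act on a proper metric space X by isometries, properly and cocompactly. Fix x₀ ∈ X and let g ∈ G. Suppose ξ : [0,∞) → X is a geodesic ray with ξ(0) = x₀ such that d(ξ(t), gξ(t)) ≤ M for all t ≥ 0. Then there exist elements w_j ∈ Z_g = {v ∈ G : gv = vg} (for j ∈ ℕ) and an unbounded sequence t_j → ∞ with d(ξ(t_j), w_j x₀) uniformly bounded. -/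
section GroupAction

variable {G : Type*} {X : Type*} [Group G] [MetricSpace X] [MulAction G X] [IsIsometricSMul G X]

/-- The image of a geodesic ray under the action of a group element. -/
def smulRay (g : G) (ξ : Ray X) : Ray X :=
  ⟨fun t => g • ξ.1 t, fun s t hs ht => by rw [dist_smul]; exact ξ.2 s t hs ht⟩

/-- The induced action of a group element on the boundary. -/
def boundarySMul (g : G) : Boundary X → Boundary X :=
  @Quotient.map _ _ (raySetoid X) (raySetoid X) (smulRay g)
    (fun ξ ζ h => by
      obtain ⟨N, hN⟩ := h
      exact ⟨N, fun t ht => by simpa [smulRay, dist_smul] using hN t ht⟩)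

/-- Convergence of a sequence of points of `X` to the boundary point of the ray `ξ`
issuing from `x₀`, in the cone topology: eventually the points leave every ball around
`x₀` and the geodesics from `x₀` to them fellow-travel `ξ`. -/
def ConvergesTo (x₀ : X) (x : ℕ → X) (ξ : Ray X) : Prop :=
  ∀ r > (0:ℝ), ∀ ε > (0:ℝ), ∃ n₀ : ℕ, ∀ n ≥ n₀,
    r < dist x₀ (x n) ∧
    ∀ γ : ℝ → X, IsGeodesicOn γ 0 (dist x₀ (x n)) → γ 0 = x₀ → γ (dist x₀ (x n)) = x n →
      dist (ξ.1 r) (γ r) < ε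

/-- The limit set of a subset `A ⊆ G`: boundary points which are limits of orbit
sequences `vᵢ • x₀` with `vᵢ ∈ A`. -/
def LimitSet (A : Set G) (x₀ : X) : Set (Boundary X) :=
  {α | ∃ ξ : Ray X, ξ.1 0 = x₀ ∧ Quotient.mk (raySetoid X) ξ = α ∧
    ∃ v : ℕ → G, (∀ i, v i ∈ A) ∧ ConvergesTo x₀ (fun i => v i • x₀) ξ}

/-- A (metrically) proper action: orbit balls contain only finitely many orbit points. -/
def ProperAction (G : Type*) (X : Type*) [Group G] [MetricSpace X] [MulAction G X] : Prop :=
  ∀ x₀ : X, ∀ r : ℝ, {h : G | dist x₀ (h • x₀) ≤ r}.Finite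

/-- A cocompact action: some orbit is coarsely dense. -/
def CocompactAction (G : Type*) (X : Type*) [Group G] [MetricSpace X] [MulAction G X] : Prop :=
  ∀ x₀ : X, ∃ N > (0:ℝ), ∀ x : X, ∃ v : G, dist (v • x₀) x ≤ N

/-- The centralizer of `g` in `G`. -/
def Zg {G : Type*} [Group G] (g : G) : Set G := {v : G | g * v = v * g}

end GroupAction


/-- For a proper cocompact isometric action of `G` on a proper metric
space `X`, if along a geodesic ray `ξ` from `x₀` the displacement by `g` is bounded by `M`,
then there are centralizer elements `w j ∈ Z_g` and times `t j → ∞`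
with `d(ξ (t j), w j • x₀)` uniformly bounded. -/
theorem centralizer_elements_along_ray {G X : Type*} [Group G] [MetricSpace X] [ProperSpace X]
    [MulAction G X] [IsIsometricSMul G X]
    (hproper : ProperAction G X) (hcocompact : CocompactAction G X)
    (x₀ : X) (g : G) (ξ : ℝ → X) (hξ : GeodesicRay ξ) (h0 : ξ 0 = x₀)
    (M : ℝ) (hM : ∀ t : ℝ, 0 ≤ t → dist (ξ t) (g • ξ t) ≤ M) :
    ∃ C : ℝ, ∃ w : ℕ → G, ∃ ts : ℕ → ℝ,
      (∀ j, w j ∈ Zg g) ∧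
      Filter.Tendsto ts Filter.atTop Filter.atTop ∧
      (∀ j, dist (ξ (ts j)) (w j • x₀) ≤ C) := by
  obtain ⟨N, hN0, hN⟩ := hcocompact x₀
  choose v hv using fun i : ℕ => hN (ξ i)
  have key : ∀ i : ℕ, dist x₀ (((v i)⁻¹ * g * v i) • x₀) ≤ 2 * N + M := by
    intro i
    have h1 : dist x₀ (((v i)⁻¹ * g * v i) • x₀)
        = dist (v i • x₀) ((g * v i) • x₀) := by
      rw [← dist_smul (v i), smul_smul]
      congr 1
      group
    rw [h1]
    have h2 : dist (v i • x₀) ((g * v i) • x₀)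
        ≤ dist (v i • x₀) (ξ i) + dist (ξ i) (g • ξ i) + dist (g • ξ i) ((g * v i) • x₀) :=
      dist_triangle4 _ _ _ _
    have h3 : dist (g • ξ i) ((g * v i) • x₀) = dist (v i • x₀) (ξ i) := by
      rw [mul_smul, dist_smul, dist_comm]
    have h4 := hv i
    have h5 := hM i (by positivity)
    rw [h3] at h2
    linarith
  have hfin := hproper x₀ (2 * N + M)
  haveI : Finite ({h : G | dist x₀ (h • x₀) ≤ 2 * N + M}) := hfin
  obtain ⟨y, hy⟩ := Finite.exists_infinite_fiber
    (fun i : ℕ => (⟨(v i)⁻¹ * g * v i, key i⟩ : {h : G | dist x₀ (h • x₀) ≤ 2 * N + M}))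
  have hA : ((fun i : ℕ => (⟨(v i)⁻¹ * g * v i, key i⟩ :
      {h : G | dist x₀ (h • x₀) ≤ 2 * N + M})) ⁻¹' {y}).Infinite :=
    Set.infinite_coe_iff.mp hy
  obtain ⟨i₀, hi₀⟩ := hA.nonempty
  choose idx hidx hgt using fun j : ℕ => hA.exists_gt j
  have hconj : ∀ j, (v (idx j))⁻¹ * g * v (idx j) = (v i₀)⁻¹ * g * v i₀ := by
    intro j
    have := (hidx j).trans hi₀.symm
    exact congrArg Subtype.val this
  refine ⟨N + dist x₀ ((v i₀)⁻¹ • x₀), fun j => v (idx j) * (v i₀)⁻¹,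
    fun j => (idx j : ℝ), ?_, ?_, ?_⟩
  · intro j
    have e := hconj j
    show g * (v (idx j) * (v i₀)⁻¹) = (v (idx j) * (v i₀)⁻¹) * g
    calc g * (v (idx j) * (v i₀)⁻¹)
        = v (idx j) * ((v (idx j))⁻¹ * g * v (idx j)) * (v i₀)⁻¹ := by group
      _ = v (idx j) * ((v i₀)⁻¹ * g * v i₀) * (v i₀)⁻¹ := by rw [e]
      _ = (v (idx j) * (v i₀)⁻¹) * g := by group
  · refine Filter.tendsto_atTop_mono (fun j => ?_) tendsto_natCast_atTop_atTop
    exact_mod_cast (hgt j).le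
  · intro j
    have h1 : (v (idx j) * (v i₀)⁻¹) • x₀ = v (idx j) • ((v i₀)⁻¹ • x₀) := mul_smul _ _ _
    calc dist (ξ (idx j)) ((v (idx j) * (v i₀)⁻¹) • x₀)
        ≤ dist (ξ (idx j)) (v (idx j) • x₀)
          + dist (v (idx j) • x₀) ((v (idx j) * (v i₀)⁻¹) • x₀) := dist_triangle _ _ _
      _ ≤ N + dist x₀ ((v i₀)⁻¹ • x₀) := by
          rw [h1, dist_smul, dist_comm (ξ _)]
          exact add_le_add (hv _) le_rfl
end

section
/- Suppose a group G acts geometrically (properly, cocompactly, by isometries) on a proper CAT(0) space X, and let g ∈ G. Then the fixed-point set 𝓕_g = {α ∈ ∂X : gα = α} of g in the boundary equals the limit set L(Z_g) of the centralizer Z_g = {v ∈ G : gv = vg}. -/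
namespace CAT0Aux

variable {X : Type*} [MetricSpace X]

/-- `m` is a midpoint of `p` and `q`. -/
def Midpt (p q m : X) : Prop := dist p m = dist p q / 2 ∧ dist q m = dist p q / 2

lemma midpt_symm {p q m : X} (h : Midpt p q m) : Midpt q p m := by
  obtain ⟨h1, h2⟩ := h
  exact ⟨by rw [dist_comm q p]; exact h2, by rw [dist_comm q p]; exact h1⟩

/-- CN inequality applied twice: midpoints from a common point. -/
lemma cn_half (hX : CAT0 X) {p q q' m m' : X}
    (hm : Midpt p q m) (hm' : Midpt p q' m') : dist m m' ≤ dist q q' / 2 := by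
  have h1 := hX.2 m' p q m hm.1 hm.2
  have h2 := hX.2 q p q' m' hm'.1 hm'.2
  have e1 : dist m' m = dist m m' := dist_comm m' m
  have e2 : dist m' p = dist p q' / 2 := by rw [dist_comm m' p]; exact hm'.1
  have e3 : dist m' q = dist q m' := dist_comm m' q
  have e4 : dist q p = dist p q := dist_comm q p
  rw [e1, e2, e3] at h1
  rw [e4] at h2
  nlinarith [dist_nonneg (x := m) (y := m'), dist_nonneg (x := q) (y := q'),
    dist_nonneg (x := q) (y := m')]

/-- A geodesic space has midpoints. -/
lemma exists_midpt (hG : GeodesicSpace X) (p q : X) : ∃ m : X, Midpt p q m := by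
  obtain ⟨γ, h0, h1, hgeo⟩ := hG p q
  have hd : (0:ℝ) ≤ dist p q := dist_nonneg
  refine ⟨γ (dist p q / 2), ?_, ?_⟩
  · have h := hgeo 0 ⟨le_refl _, hd⟩ (dist p q / 2) ⟨by linarith, by linarith⟩
    rw [h0] at h
    rw [h, abs_of_nonpos (by linarith)]; ring
  · have h := hgeo (dist p q) ⟨hd, le_refl _⟩ (dist p q / 2) ⟨by linarith, by linarith⟩
    rw [h1] at h
    rw [h, abs_of_nonneg (by linarith)]; ring

/-- Convexity of the metric at midpoints. -/
lemma midpt_conv (hX : CAT0 X) {p q p' q' m m' : X}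
    (hm : Midpt p q m) (hm' : Midpt p' q' m') :
    dist m m' ≤ (dist p p' + dist q q') / 2 := by
  obtain ⟨n, hn⟩ := exists_midpt hX.1 p q'
  have h1 : dist m n ≤ dist q q' / 2 := cn_half hX hm hn
  have h2 : dist n m' ≤ dist p p' / 2 :=
    cn_half hX (midpt_symm hn) (midpt_symm hm')
  calc dist m m' ≤ dist m n + dist n m' := dist_triangle m n m'
    _ ≤ (dist p p' + dist q q') / 2 := by linarith

lemma geodesicOn_midpt {γ : ℝ → X} {a b s t : ℝ} (hγ : IsGeodesicOn γ a b)
    (hs : s ∈ Set.Icc a b) (ht : t ∈ Set.Icc a b) :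
    Midpt (γ s) (γ t) (γ ((s + t) / 2)) := by
  have hmid : (s + t) / 2 ∈ Set.Icc a b :=
    ⟨by obtain ⟨h1,_⟩ := hs; obtain ⟨h2,_⟩ := ht; linarith,
     by obtain ⟨_,h1⟩ := hs; obtain ⟨_,h2⟩ := ht; linarith⟩
  constructor
  · rw [hγ s hs ((s+t)/2) hmid, hγ s hs t ht]
    rw [show s - (s+t)/2 = (s-t)/2 by ring, abs_div]
    simp
  · rw [hγ t ht ((s+t)/2) hmid, hγ s hs t ht]
    rw [show t - (s+t)/2 = -((s-t)/2) by ring, abs_neg, abs_div]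
    simp

/-- The fundamental convexity lemma: the distance between points moving at
constant speed along two geodesics is bounded by the linear interpolation. -/
lemma geodesic_convex (hX : CAT0 X) {γ δ : ℝ → X} {a b : ℝ}
    (ha : 0 ≤ a) (hb : 0 ≤ b)
    (hγ : IsGeodesicOn γ 0 a) (hδ : IsGeodesicOn δ 0 b)
    {t : ℝ} (ht0 : 0 ≤ t) (ht1 : t ≤ 1) :
    dist (γ (t * a)) (δ (t * b)) ≤
      (1 - t) * dist (γ 0) (δ 0) + t * dist (γ a) (δ b) := by
  set d₀ := dist (γ 0) (δ 0) with hd₀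
  set d₁ := dist (γ a) (δ b) with hd₁
  have hmem : ∀ s : ℝ, 0 ≤ s → s ≤ 1 → s * a ∈ Set.Icc (0:ℝ) a := by
    intro s h0 h1
    constructor
    · exact mul_nonneg h0 ha
    · calc s * a ≤ 1 * a := by apply mul_le_mul_of_nonneg_right h1 ha
        _ = a := one_mul a
  have hmem' : ∀ s : ℝ, 0 ≤ s → s ≤ 1 → s * b ∈ Set.Icc (0:ℝ) b := by
    intro s h0 h1
    constructor
    · exact mul_nonneg h0 hb
    · calc s * b ≤ 1 * b := by apply mul_le_mul_of_nonneg_right h1 hb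
        _ = b := one_mul b
  -- midpoint convexity
  have key : ∀ s u : ℝ, 0 ≤ s → s ≤ 1 → 0 ≤ u → u ≤ 1 →
      dist (γ (((s+u)/2) * a)) (δ (((s+u)/2) * b)) ≤
        (dist (γ (s*a)) (δ (s*b)) + dist (γ (u*a)) (δ (u*b))) / 2 := by
    intro s u hs0 hs1 hu0 hu1
    have h1 := geodesicOn_midpt hγ (hmem s hs0 hs1) (hmem u hu0 hu1)
    have h2 := geodesicOn_midpt hδ (hmem' s hs0 hs1) (hmem' u hu0 hu1)
    have e1 : (s*a + u*a)/2 = ((s+u)/2) * a := by ring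
    have e2 : (s*b + u*b)/2 = ((s+u)/2) * b := by ring
    rw [e1] at h1; rw [e2] at h2
    exact midpt_conv hX h1 h2
  -- dyadic values
  have dyadic : ∀ k : ℕ, ∀ j : ℕ, j ≤ 2^k →
      dist (γ (((j:ℝ)/2^k) * a)) (δ (((j:ℝ)/2^k) * b)) ≤
        (1 - (j:ℝ)/2^k) * d₀ + ((j:ℝ)/2^k) * d₁ := by
    intro k
    induction k with
    | zero =>
      intro j hj
      interval_cases j
      · simp [hd₀]
      · simp [hd₁]
    | succ k ih =>
      intro j hj
      rcases Nat.even_or_odd j with ⟨i, hi⟩ | ⟨i, hi⟩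
      · have hrw : (j:ℝ)/2^(k+1) = (i:ℝ)/2^k := by
          subst hi; push_cast; field_simp; ring
        rw [hrw]
        apply ih
        omega
      · -- j = 2i+1
        have hik : i + 1 ≤ 2^k := by omega
        have hik' : i ≤ 2^k := by omega
        have h1 := ih i hik'
        have h2 := ih (i+1) hik
        have hs0 : (0:ℝ) ≤ (i:ℝ)/2^k := by positivity
        have hpow : (0:ℝ) < 2^k := by positivity
        have hs1 : (i:ℝ)/2^k ≤ 1 := by
          rw [div_le_one hpow]
          exact_mod_cast Nat.cast_le.mpr hik'
        have hu0 : (0:ℝ) ≤ ((i:ℝ)+1)/2^k := by positivity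
        have hu1 : ((i:ℝ)+1)/2^k ≤ 1 := by
          rw [div_le_one hpow]
          have : ((i:ℝ)+1) = ((i+1:ℕ):ℝ) := by push_cast; ring
          rw [this]
          exact_mod_cast Nat.cast_le.mpr hik
        have hmidval : ((i:ℝ)/2^k + ((i:ℝ)+1)/2^k)/2 = (j:ℝ)/2^(k+1) := by
          subst hi; push_cast; field_simp; ring
        have h3 := key ((i:ℝ)/2^k) (((i:ℝ)+1)/2^k) hs0 hs1 hu0 hu1
        rw [hmidval] at h3
        have h2' : dist (γ ((((i:ℝ)+1)/2^k)*a)) (δ ((((i:ℝ)+1)/2^k)*b)) ≤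
            (1 - ((i:ℝ)+1)/2^k) * d₀ + (((i:ℝ)+1)/2^k) * d₁ := by
          have : ((i:ℝ)+1)/2^k = ((i+1:ℕ):ℝ)/2^k := by push_cast; ring
          rw [this]; exact h2
        calc dist (γ (((j:ℝ)/2^(k+1)) * a)) (δ (((j:ℝ)/2^(k+1)) * b))
            ≤ (dist (γ (((i:ℝ)/2^k)*a)) (δ (((i:ℝ)/2^k)*b)) +
               dist (γ ((((i:ℝ)+1)/2^k)*a)) (δ ((((i:ℝ)+1)/2^k)*b))) / 2 := h3
          _ ≤ (((1 - (i:ℝ)/2^k) * d₀ + ((i:ℝ)/2^k) * d₁) +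
               ((1 - ((i:ℝ)+1)/2^k) * d₀ + (((i:ℝ)+1)/2^k) * d₁)) / 2 := by linarith
          _ = (1 - (j:ℝ)/2^(k+1)) * d₀ + ((j:ℝ)/2^(k+1)) * d₁ := by
              subst hi; push_cast; field_simp; ring
  -- Lipschitz estimate
  have lip : ∀ s u : ℝ, 0 ≤ s → s ≤ 1 → 0 ≤ u → u ≤ 1 →
      dist (γ (u*a)) (δ (u*b)) ≤ dist (γ (s*a)) (δ (s*b)) + |u - s| * (a + b) := by
    intro s u hs0 hs1 hu0 hu1
    have e1 : dist (γ (u*a)) (γ (s*a)) = |u - s| * a := by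
      rw [hγ (u*a) (hmem u hu0 hu1) (s*a) (hmem s hs0 hs1)]
      rw [show u*a - s*a = (u-s)*a by ring, abs_mul, abs_of_nonneg ha]
    have e2 : dist (δ (s*b)) (δ (u*b)) = |u - s| * b := by
      rw [hδ (s*b) (hmem' s hs0 hs1) (u*b) (hmem' u hu0 hu1)]
      rw [show s*b - u*b = -((u-s)*b) by ring, abs_neg, abs_mul, abs_of_nonneg hb]
    calc dist (γ (u*a)) (δ (u*b))
        ≤ dist (γ (u*a)) (γ (s*a)) + dist (γ (s*a)) (δ (s*b)) + dist (δ (s*b)) (δ (u*b)) :=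
          dist_triangle4 _ _ _ _
      _ = dist (γ (s*a)) (δ (s*b)) + |u - s| * (a + b) := by rw [e1, e2]; ring
  -- approximate t by dyadics
  apply le_of_forall_pos_le_add
  intro ε hε
  set K := a + b + |d₁ - d₀| with hK
  have hK0 : 0 ≤ K := by positivity
  obtain ⟨k, hk⟩ := pow_unbounded_of_one_lt (K / ε) (by norm_num : (1:ℝ) < 2)
  have hpow : (0:ℝ) < 2^k := by positivity
  set j := ⌊t * 2^k⌋₊ with hj
  have hjle : (j:ℝ) ≤ t * 2^k := Nat.floor_le (by positivity)
  have hjgt : t * 2^k < (j:ℝ) + 1 := Nat.lt_floor_add_one _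
  have hj2k : j ≤ 2^k := by
    have : t * 2^k ≤ 2^k := by nlinarith
    have h2 : (j:ℝ) ≤ ((2^k : ℕ) : ℝ) := by push_cast; linarith
    exact_mod_cast h2
  set s := (j:ℝ)/2^k with hs
  have hs0 : 0 ≤ s := by positivity
  have hs1 : s ≤ 1 := by
    rw [hs, div_le_one hpow]
    have : ((j:ℕ):ℝ) ≤ ((2^k:ℕ):ℝ) := by exact_mod_cast hj2k
    push_cast at this ⊢; linarith
  have hts : |t - s| ≤ 1/2^k := by
    have h1 : 0 ≤ t - s := by
      rw [hs, sub_nonneg, div_le_iff₀ hpow]; linarith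
    have h2 : t - s ≤ 1/2^k := by
      rw [hs, sub_le_iff_le_add, ← add_div, le_div_iff₀ hpow]; linarith
    rw [abs_of_nonneg h1]; exact h2
  have hdy := dyadic k j hj2k
  have hlip := lip s t hs0 hs1 ht0 ht1
  have habs : |t - s| * (a+b) ≤ (a+b)/2^k := by
    rw [div_eq_mul_inv, mul_comm (a+b)]
    apply mul_le_mul_of_nonneg_right _ (by linarith)
    rwa [← one_div]
  have hline : (1 - s) * d₀ + s * d₁ ≤ (1 - t) * d₀ + t * d₁ + |d₁ - d₀|/2^k := by
    have : (1 - s) * d₀ + s * d₁ - ((1 - t) * d₀ + t * d₁) = (s - t) * (d₁ - d₀) := by ring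
    have h2 : (s - t) * (d₁ - d₀) ≤ |d₁ - d₀|/2^k := by
      calc (s - t) * (d₁ - d₀) ≤ |(s - t) * (d₁ - d₀)| := le_abs_self _
        _ = |s - t| * |d₁ - d₀| := abs_mul _ _
        _ ≤ (1/2^k) * |d₁ - d₀| := by
            apply mul_le_mul_of_nonneg_right _ (abs_nonneg _)
            rwa [abs_sub_comm] at hts
        _ = |d₁ - d₀|/2^k := by ring
    linarith
  have hKe : K/2^k ≤ ε := by
    rw [div_le_iff₀ hpow]
    rw [div_lt_iff₀ hε] at hk
    nlinarith
  calc dist (γ (t*a)) (δ (t*b))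
      ≤ dist (γ (s*a)) (δ (s*b)) + |t - s| * (a+b) := lip s t hs0 hs1 ht0 ht1
    _ ≤ ((1 - s) * d₀ + s * d₁) + (a+b)/2^k := by
        rw [hs] at *; linarith [dyadic k j hj2k]
    _ ≤ (1 - t) * d₀ + t * d₁ + |d₁ - d₀|/2^k + (a+b)/2^k := by linarith
    _ = (1 - t) * d₀ + t * d₁ + K/2^k := by rw [hK]; ring
    _ ≤ (1 - t) * d₀ + t * d₁ + ε := by linarith

/-- Any geodesic from `x₀` to a point near `ξ T` fellow-travels the ray `ξ`. -/
lemma fellow (hX : CAT0 X) {ξ : ℝ → X} (hξ : GeodesicRay ξ) {x₀ : X} (h0 : ξ 0 = x₀)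
    {T B r : ℝ} (hT : 0 < T) (hB : 0 ≤ B) {y : X} (hy : dist y (ξ T) ≤ B)
    {γ : ℝ → X} (hγ : IsGeodesicOn γ 0 (dist x₀ y)) (hγ0 : γ 0 = x₀)
    (hγe : γ (dist x₀ y) = y) (hr0 : 0 < r) (hrT : r ≤ T) (hrL : r ≤ dist x₀ y) :
    dist (ξ r) (γ r) ≤ 2 * B * r / T := by
  set L := dist x₀ y with hL
  have hL0 : 0 ≤ L := dist_nonneg
  have hξgeo : IsGeodesicOn ξ 0 T := fun s hs t ht => hξ s t hs.1 ht.1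
  have hdT : dist (ξ 0) (ξ T) = T := by
    rw [hξ 0 T le_rfl hT.le, abs_of_nonpos (by linarith)]; ring
  have hLT : |L - T| ≤ B := by
    have h := abs_dist_sub_le y (ξ T) x₀
    rw [dist_comm y x₀, ← hL] at h
    rw [dist_comm (ξ T) x₀, ← h0, hdT] at h
    exact le_trans h hy
  set u := r / T with hu
  have hu0 : 0 ≤ u := by positivity
  have hu1 : u ≤ 1 := by rw [hu, div_le_one hT]; exact hrT
  have hconv := geodesic_convex hX hT.le hL0 hξgeo hγ hu0 hu1
  rw [h0, hγ0, dist_self, hγe] at hconv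
  have huT : u * T = r := by rw [hu, div_mul_cancel₀ _ hT.ne']
  rw [huT] at hconv
  have h1 : dist (ξ r) (γ (u * L)) ≤ u * B := by
    calc dist (ξ r) (γ (u * L)) ≤ (1 - u) * 0 + u * dist (ξ T) y := hconv
      _ = u * dist y (ξ T) := by rw [dist_comm]; ring
      _ ≤ u * B := by apply mul_le_mul_of_nonneg_left hy hu0
  have h2 : dist (γ (u * L)) (γ r) ≤ u * B := by
    have huL : u * L ∈ Set.Icc (0:ℝ) L :=
      ⟨mul_nonneg hu0 hL0, by calc u * L ≤ 1 * L := mul_le_mul_of_nonneg_right hu1 hL0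
                                _ = L := one_mul L⟩
    have hrIcc : r ∈ Set.Icc (0:ℝ) L := ⟨hr0.le, hrL⟩
    rw [hγ (u*L) huL r hrIcc]
    have : u * L - r = u * (L - T) := by rw [hu]; field_simp
    rw [this, abs_mul, abs_of_nonneg hu0]
    exact mul_le_mul_of_nonneg_left hLT hu0
  calc dist (ξ r) (γ r) ≤ dist (ξ r) (γ (u*L)) + dist (γ (u*L)) (γ r) := dist_triangle _ _ _
    _ ≤ u * B + u * B := add_le_add h1 h2
    _ = 2 * B * r / T := by rw [hu]; ring

/-- From any ray, there is an asymptotic ray based at the given point `x₀`. -/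
lemma exists_ray_from (hX : CAT0 X) [ProperSpace X] (x₀ : X) (ζ : Ray X) :
    ∃ ξ : Ray X, ξ.1 0 = x₀ ∧ Asymptotic ξ.1 ζ.1 := by
  set D := dist x₀ (ζ.1 0) with hD
  have hD0 : 0 ≤ D := dist_nonneg
  choose σ hσ0 hσe hσg using fun n : ℕ => hX.1 x₀ (ζ.1 n)
  set L : ℕ → ℝ := fun n => dist x₀ (ζ.1 (n:ℝ)) with hLdef
  have hζd : ∀ s t : ℝ, 0 ≤ s → 0 ≤ t → dist (ζ.1 s) (ζ.1 t) = |s - t| := ζ.2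
  have hLn : ∀ n : ℕ, |L n - (n:ℝ)| ≤ D := by
    intro n
    have h := abs_dist_sub_le x₀ (ζ.1 0) (ζ.1 (n:ℝ))
    have e : dist (ζ.1 0) (ζ.1 (n:ℝ)) = (n:ℝ) := by
      rw [hζd 0 n le_rfl (Nat.cast_nonneg n), zero_sub, abs_neg,
        abs_of_nonneg (Nat.cast_nonneg n)]
    rw [e] at h
    exact h
  have hLlow : ∀ n : ℕ, (n:ℝ) - D ≤ L n := by
    intro n; have := hLn n; rw [abs_le] at this; linarith [this.1]
  have hLhigh : ∀ n : ℕ, L n ≤ (n:ℝ) + D := by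
    intro n; have := hLn n; rw [abs_le] at this; linarith [this.2]
  -- Step A: the geodesic σ m fellow-travels ζ
  have stepA : ∀ m : ℕ, 0 < m → ∀ t : ℝ, 0 ≤ t → t ≤ (m:ℝ) →
      dist (σ m (L m * t / m)) (ζ.1 t) ≤ D := by
    intro m hm t ht0 htm
    have hm0 : (0:ℝ) < m := Nat.cast_pos.mpr hm
    have hLm0 : (0:ℝ) ≤ L m := dist_nonneg
    have hγrg : IsGeodesicOn (fun s => σ m (L m - s)) 0 (L m) := by
      intro s hs u hu
      have h := hσg m (L m - s) ⟨by linarith [hs.2], by linarith [hs.1]⟩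
        (L m - u) ⟨by linarith [hu.2], by linarith [hu.1]⟩
      simp only [] at h ⊢
      rw [h, show (L m - s) - (L m - u) = -(s - u) by ring, abs_neg]
    have hδrg : IsGeodesicOn (fun s => ζ.1 ((m:ℝ) - s)) 0 (m:ℝ) := by
      intro s hs u hu
      simp only []
      rw [hζd ((m:ℝ) - s) ((m:ℝ) - u) (by linarith [hs.2]) (by linarith [hu.2]),
        show ((m:ℝ) - s) - ((m:ℝ) - u) = -(s - u) by ring, abs_neg]
    have hu0 : (0:ℝ) ≤ 1 - t/m := by
      rw [sub_nonneg, div_le_one hm0]; exact htm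
    have hu1 : 1 - t/m ≤ 1 := by
      have : 0 ≤ t/m := by positivity
      linarith
    have hcnv := geodesic_convex hX hLm0 hm0.le hγrg hδrg hu0 hu1
    have e1 : L m - 0 = L m := by ring
    have e2 : (m:ℝ) - 0 = (m:ℝ) := by ring
    have e3 : L m - (1 - t/m) * L m = L m * t / m := by field_simp; ring
    have e4 : (m:ℝ) - (1 - t/m) * m = t := by field_simp; ring
    have e5 : L m - L m = 0 := by ring
    rw [e1, e2, e3, e4, e5, hσe m, hσ0 m, dist_self] at hcnv
    calc dist (σ m (L m * t / m)) (ζ.1 t)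
        ≤ (1 - (1 - t/m)) * 0 + (1 - t/m) * dist x₀ (ζ.1 ((m:ℝ) - (m:ℝ))) := hcnv
      _ = (1 - t/m) * D := by rw [sub_self, ← hD]; ring
      _ ≤ 1 * D := by apply mul_le_mul_of_nonneg_right hu1 hD0
      _ = D := one_mul D
  -- Step B: Cauchy estimate
  have stepB : ∀ n m : ℕ, 0 < n → n ≤ m → ∀ t : ℝ, 0 ≤ t → t ≤ L n → t ≤ L m →
      0 < L n → dist (σ n t) (σ m t) ≤ 3 * D * t / L n := by
    intro n m hn hnm t ht0 htLn htLm hLn0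
    have hm : 0 < m := lt_of_lt_of_le hn hnm
    have hm0 : (0:ℝ) < m := Nat.cast_pos.mpr hm
    have hn0 : (0:ℝ) < n := Nat.cast_pos.mpr hn
    have hnm' : (n:ℝ) ≤ (m:ℝ) := Nat.cast_le.mpr hnm
    have hLm0 : (0:ℝ) ≤ L m := dist_nonneg
    set ℓ := L m * n / m with hℓ
    have hℓ0 : 0 ≤ ℓ := by positivity
    have hℓLm : ℓ ≤ L m := by
      rw [hℓ]
      calc L m * n / m = L m * ((n:ℝ)/m) := by ring
        _ ≤ L m * 1 := by
            apply mul_le_mul_of_nonneg_left _ hLm0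
            rw [div_le_one hm0]; exact hnm'
        _ = L m := mul_one _
    have hA : dist (σ m ℓ) (ζ.1 (n:ℝ)) ≤ D := stepA m hm (n:ℝ) (Nat.cast_nonneg n) hnm'
    have hσmℓ : IsGeodesicOn (σ m) 0 ℓ := fun s hs u hu =>
      hσg m s ⟨hs.1, le_trans hs.2 hℓLm⟩ u ⟨hu.1, le_trans hu.2 hℓLm⟩
    have hu0 : 0 ≤ t / L n := by positivity
    have hu1 : t / L n ≤ 1 := by rw [div_le_one hLn0]; exact htLn
    have hcnv := geodesic_convex hX (dist_nonneg : (0:ℝ) ≤ L n) hℓ0 (hσg n) hσmℓ hu0 hu1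
    rw [hσ0 n, hσ0 m, dist_self, hσe n] at hcnv
    have e1 : t / L n * L n = t := div_mul_cancel₀ t hLn0.ne'
    rw [e1] at hcnv
    have h1 : dist (σ n t) (σ m (t / L n * ℓ)) ≤ t / L n * D := by
      calc dist (σ n t) (σ m (t / L n * ℓ))
          ≤ (1 - t/L n) * 0 + t/L n * dist (ζ.1 (n:ℝ)) (σ m ℓ) := hcnv
        _ = t/L n * dist (σ m ℓ) (ζ.1 (n:ℝ)) := by rw [dist_comm]; ring
        _ ≤ t/L n * D := mul_le_mul_of_nonneg_left hA hu0
    have hℓn : |ℓ - (n:ℝ)| ≤ D := by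
      have : ℓ - (n:ℝ) = (L m - m) * ((n:ℝ)/m) := by rw [hℓ]; field_simp
      rw [this, abs_mul, abs_of_nonneg (by positivity : (0:ℝ) ≤ (n:ℝ)/m)]
      calc |L m - m| * ((n:ℝ)/m) ≤ D * 1 := by
            apply mul_le_mul (hLn m) (by rw [div_le_one hm0]; exact hnm')
              (by positivity) hD0
        _ = D := mul_one D
    have hℓLn : |ℓ - L n| ≤ 2 * D := by
      have h2 := hLn n
      calc |ℓ - L n| = |(ℓ - (n:ℝ)) + ((n:ℝ) - L n)| := by ring_nf
        _ ≤ |ℓ - (n:ℝ)| + |(n:ℝ) - L n| := abs_add_le _ _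
        _ ≤ D + D := add_le_add hℓn (by rw [abs_sub_comm]; exact h2)
        _ = 2 * D := by ring
    have h2 : dist (σ m (t / L n * ℓ)) (σ m t) ≤ t / L n * (2 * D) := by
      have hmem1 : t / L n * ℓ ∈ Set.Icc (0:ℝ) (L m) := by
        constructor
        · positivity
        · have h3 : t/L n * ℓ ≤ 1 * ℓ := mul_le_mul_of_nonneg_right hu1 hℓ0
          rw [one_mul] at h3
          exact le_trans h3 hℓLm
      have hmem2 : t ∈ Set.Icc (0:ℝ) (L m) := ⟨ht0, htLm⟩
      rw [hσg m (t/L n * ℓ) hmem1 t hmem2]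
      have : t / L n * ℓ - t = t / L n * (ℓ - L n) := by field_simp
      rw [this, abs_mul, abs_of_nonneg hu0]
      exact mul_le_mul_of_nonneg_left hℓLn hu0
    calc dist (σ n t) (σ m t)
        ≤ dist (σ n t) (σ m (t / L n * ℓ)) + dist (σ m (t / L n * ℓ)) (σ m t) :=
          dist_triangle _ _ _
      _ ≤ t/L n * D + t/L n * (2*D) := add_le_add h1 h2
      _ = 3 * D * t / L n := by field_simp; ring
  -- Cauchy sequences and limits
  have hcauchy : ∀ t : ℝ, 0 ≤ t → CauchySeq (fun n => σ n t) := by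
    intro t ht
    rw [Metric.cauchySeq_iff]
    intro ε hε
    obtain ⟨N, hN⟩ := exists_nat_gt (D + t + 1 + 3*D*t/ε)
    have key : ∀ a b : ℕ, N ≤ a → a ≤ b → dist (σ a t) (σ b t) < ε := by
      intro a b hNa hab
      have hNa' : (N:ℝ) ≤ a := Nat.cast_le.mpr hNa
      have hab' : (a:ℝ) ≤ b := Nat.cast_le.mpr hab
      have hDt : 0 ≤ 3*D*t/ε := by positivity
      have ha1 : t + 1 < L a := by have := hLlow a; linarith
      have hb1 : t + 1 < L b := by have := hLlow b; linarith
      have hLa0 : 0 < L a := by linarith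
      have ha : 0 < a := by
        by_contra h
        push_neg at h
        interval_cases a
        · simp only [Nat.cast_zero] at hNa'
          have := hLhigh 0
          simp only [Nat.cast_zero, zero_add] at this
          linarith
      have hB := stepB a b ha hab t ht (by linarith) (by linarith) hLa0
      have hfin : 3*D*t/L a < ε := by
        rw [div_lt_iff₀ hLa0]
        have h2 : 3*D*t/ε < L a := by have := hLlow a; linarith
        rw [div_lt_iff₀ hε] at h2
        linarith
      exact lt_of_le_of_lt hB hfin
    refine ⟨N, fun m hm n hn => ?_⟩
    rcases le_total m n with h | h
    · exact key m n hm h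
    · rw [dist_comm]; exact key n m hn h
  have hex : ∀ t : ℝ, 0 ≤ t → ∃ y : X, Filter.Tendsto (fun n => σ n t)
      Filter.atTop (nhds y) := fun t ht => cauchySeq_tendsto_of_complete (hcauchy t ht)
  classical
  set ξf : ℝ → X := fun t => if h : 0 ≤ t then (hex t h).choose else x₀ with hξf
  have htend : ∀ t : ℝ, 0 ≤ t → Filter.Tendsto (fun n => σ n t)
      Filter.atTop (nhds (ξf t)) := by
    intro t ht
    have he : ξf t = (hex t ht).choose := by rw [hξf]; exact dif_pos ht
    rw [he]
    exact (hex t ht).choose_spec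
  have hray : GeodesicRay ξf := by
    intro s t hs ht
    have h1 := (htend s hs).dist (htend t ht)
    obtain ⟨N, hN⟩ := exists_nat_gt (max s t + D)
    have h2 : ∀ᶠ (n:ℕ) in Filter.atTop, dist (σ n s) (σ n t) = |s - t| := by
      rw [Filter.eventually_atTop]
      refine ⟨N, fun n hn => ?_⟩
      have hn' : (N:ℝ) ≤ n := Nat.cast_le.mpr hn
      have hlow := hLlow n
      have hs' : s ≤ L n := by
        have := le_max_left s t; linarith
      have ht' : t ≤ L n := by
        have := le_max_right s t; linarith
      exact hσg n s ⟨hs, hs'⟩ t ⟨ht, ht'⟩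
    exact tendsto_nhds_unique (Filter.Tendsto.congr' h2 h1) tendsto_const_nhds
  have hx0 : ξf 0 = x₀ := by
    have h1 := htend 0 le_rfl
    have h2 : Filter.Tendsto (fun n : ℕ => σ n 0) Filter.atTop (nhds x₀) := by
      have he : (fun n : ℕ => σ n 0) = fun _ => x₀ := funext fun n => hσ0 n
      rw [he]; exact tendsto_const_nhds
    exact tendsto_nhds_unique h1 h2
  refine ⟨⟨ξf, hray⟩, hx0, ⟨2*D, ?_⟩⟩
  intro t ht
  show dist (ξf t) (ζ.1 t) ≤ 2*D
  have h1 := (htend t ht).dist (tendsto_const_nhds (x := ζ.1 t) (f := Filter.atTop))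
  apply le_of_tendsto h1
  rw [Filter.eventually_atTop]
  obtain ⟨N, hN⟩ := exists_nat_gt (t + D + 1)
  refine ⟨N, fun n hn => ?_⟩
  have hn' : (N:ℝ) ≤ n := Nat.cast_le.mpr hn
  have hlow := hLlow n
  have hn0 : 0 < n := by
    by_contra h
    push_neg at h
    interval_cases n
    · simp only [Nat.cast_zero] at hn'
      linarith
  have hnn : (0:ℝ) < n := Nat.cast_pos.mpr hn0
  have htn : t ≤ (n:ℝ) := by linarith
  have hA := stepA n hn0 t ht htn
  have htLn : t ≤ L n := by linarith
  have hmem1 : t ∈ Set.Icc (0:ℝ) (L n) := ⟨ht, htLn⟩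
  have hmem2 : L n * t / n ∈ Set.Icc (0:ℝ) (L n) := by
    constructor
    · positivity
    · calc L n * t / n = L n * (t/n) := by ring
        _ ≤ L n * 1 := by
            apply mul_le_mul_of_nonneg_left _ dist_nonneg
            rw [div_le_one hnn]; exact htn
        _ = L n := mul_one _
  have hmid : dist (σ n t) (σ n (L n * t / n)) ≤ D := by
    rw [hσg n t hmem1 (L n * t / n) hmem2]
    have he : t - L n * t / n = (t/n) * ((n:ℝ) - L n) := by field_simp
    rw [he, abs_mul, abs_of_nonneg (by positivity : (0:ℝ) ≤ t/n)]
    calc t/n * |(n:ℝ) - L n| ≤ 1 * D := by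
          apply mul_le_mul (by rw [div_le_one hnn]; exact htn)
            (by rw [abs_sub_comm]; exact hLn n) (abs_nonneg _) zero_le_one
      _ = D := one_mul D
  calc dist (σ n t) (ζ.1 t)
      ≤ dist (σ n t) (σ n (L n * t / n)) + dist (σ n (L n * t / n)) (ζ.1 t) :=
        dist_triangle _ _ _
    _ ≤ D + D := add_le_add hmid hA
    _ = 2*D := by ring

end CAT0Aux

/-- **Theorem 1.** For a geometric action of `G` on a proper CAT(0) space
`X` and `g ∈ G`, the fixed-point set of `g` in `∂X` is the limit set of the
centralizer of `g`. -/
theorem fixedSet_eq_limitSet_centralizer {G X : Type*} [Group G] [MetricSpace X]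
    [ProperSpace X] [MulAction G X] [IsIsometricSMul G X]
    (hX : CAT0 X) (hproper : ProperAction G X) (hcocompact : CocompactAction G X)
    (g : G) (x₀ : X) :
    {α : Boundary X | boundarySMul g α = α} = LimitSet (Zg g) x₀ := by
  classical
  ext α
  simp only [Set.mem_setOf_eq]
  constructor
  · -- fixed point ⊆ limit set of centralizer
    intro hfix
    obtain ⟨ζ, hζ⟩ := Quotient.exists_rep α
    have hasym : Asymptotic (fun t => g • ζ.1 t) ζ.1 := by
      have hq : Quotient.mk (raySetoid X) (smulRay g ζ) = Quotient.mk (raySetoid X) ζ := by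
        have hbs : boundarySMul g (Quotient.mk (raySetoid X) ζ) =
            Quotient.mk (raySetoid X) (smulRay g ζ) := rfl
        rw [← hζ] at hfix
        rw [← hbs, hfix]
      exact Quotient.exact hq
    obtain ⟨M, hM⟩ := hasym
    obtain ⟨ξ, hξ0, hξasym⟩ := CAT0Aux.exists_ray_from hX x₀ ζ
    obtain ⟨D', hD'⟩ := hξasym
    have hD'0 : 0 ≤ D' := le_trans dist_nonneg (hD' 0 le_rfl)
    have hM0 : 0 ≤ M := le_trans dist_nonneg (hM 0 le_rfl)
    -- g moves points of ξ a bounded amount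
    set M'' := M + 2*D' with hM''
    have hMg : ∀ t : ℝ, 0 ≤ t → dist (g • ξ.1 t) (ξ.1 t) ≤ M'' := by
      intro t ht
      calc dist (g • ξ.1 t) (ξ.1 t)
          ≤ dist (g • ξ.1 t) (g • ζ.1 t) + dist (g • ζ.1 t) (ζ.1 t) +
            dist (ζ.1 t) (ξ.1 t) := dist_triangle4 _ _ _ _
        _ ≤ D' + M + D' := by
            refine add_le_add (add_le_add ?_ (hM t ht)) ?_
            · rw [dist_smul]; exact hD' t ht
            · rw [dist_comm]; exact hD' t ht
        _ = M'' := by rw [hM'']; ring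
    -- cocompactness: group elements near the ray
    obtain ⟨Nc, hNc0, hNc⟩ := hcocompact x₀
    choose w hw using fun k : ℕ => hNc (ξ.1 (k:ℝ))
    -- conjugates stay in a fixed ball
    have hconj : ∀ k : ℕ, dist x₀ (((w k)⁻¹ * g * w k) • x₀) ≤ 2*Nc + M'' := by
      intro k
      have e2 : dist x₀ (((w k)⁻¹ * g * w k) • x₀) =
          dist (w k • x₀) (g • (w k • x₀)) := by
        rw [← dist_smul (w k) x₀ (((w k)⁻¹ * g * w k) • x₀), ← mul_smul]
        have e3 : w k * ((w k)⁻¹ * g * w k) = g * w k := by group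
        rw [e3, mul_smul]
      rw [e2]
      calc dist (w k • x₀) (g • (w k • x₀))
          ≤ dist (w k • x₀) (ξ.1 (k:ℝ)) + dist (ξ.1 (k:ℝ)) (g • ξ.1 (k:ℝ)) +
            dist (g • ξ.1 (k:ℝ)) (g • (w k • x₀)) := dist_triangle4 _ _ _ _
        _ ≤ Nc + M'' + Nc := by
            refine add_le_add (add_le_add (hw k) ?_) ?_
            · rw [dist_comm]; exact hMg (k:ℝ) (Nat.cast_nonneg k)
            · rw [dist_smul, dist_comm]; exact hw k
        _ = 2*Nc + M'' := by ring
    -- pigeonhole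
    have hS : {h : G | dist x₀ (h • x₀) ≤ 2*Nc + M''}.Finite := hproper x₀ _
    haveI : Finite ↥{h : G | dist x₀ (h • x₀) ≤ 2*Nc + M''} := hS.to_subtype
    set F : ℕ → ↥{h : G | dist x₀ (h • x₀) ≤ 2*Nc + M''} :=
      fun k => ⟨(w k)⁻¹ * g * w k, hconj k⟩ with hF
    obtain ⟨y, hy⟩ := Finite.exists_infinite_fiber F
    have hJinf : (F ⁻¹' {y}).Infinite := Set.infinite_coe_iff.mp hy
    have hJeq : ∀ k ∈ F ⁻¹' {y}, (w k)⁻¹ * g * w k = (y : G) := by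
      intro k hk
      have : F k = y := hk
      exact congrArg Subtype.val this
    obtain ⟨k₀, hk₀⟩ := hJinf.nonempty
    have hchoice : ∀ i : ℕ, ∃ k, k ∈ F ⁻¹' {y} ∧ i < k := by
      intro i
      obtain ⟨k, hk1, hk2⟩ := hJinf.exists_gt i
      exact ⟨k, hk1, hk2⟩
    choose u hu1 hu2 using hchoice
    set v : ℕ → G := fun i => w (u i) * (w k₀)⁻¹ with hv
    have hvZ : ∀ i, v i ∈ Zg g := by
      intro i
      have e1 := hJeq (u i) (hu1 i)
      have e2 := hJeq k₀ hk₀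
      set a := w (u i); set b := w k₀
      have key : a⁻¹ * g * a = b⁻¹ * g * b := e1.trans e2.symm
      have h := congrArg (fun x => a * x * b⁻¹) key
      show g * (a * b⁻¹) = (a * b⁻¹) * g
      calc g * (a * b⁻¹) = a * (a⁻¹ * g * a) * b⁻¹ := by group
        _ = a * (b⁻¹ * g * b) * b⁻¹ := by rw [key]
        _ = (a * b⁻¹) * g := by group
    set B := Nc + dist ((w k₀)⁻¹ • x₀) x₀ with hB
    have hB0 : 0 ≤ B := by positivity
    have hvnear : ∀ i : ℕ, dist (v i • x₀) (ξ.1 ((u i : ℕ) : ℝ)) ≤ B := by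
      intro i
      calc dist (v i • x₀) (ξ.1 ((u i : ℕ) : ℝ))
          ≤ dist ((w (u i) * (w k₀)⁻¹) • x₀) (w (u i) • x₀) +
            dist (w (u i) • x₀) (ξ.1 ((u i : ℕ) : ℝ)) := dist_triangle _ _ _
        _ ≤ dist ((w k₀)⁻¹ • x₀) x₀ + Nc := by
            refine add_le_add ?_ (hw (u i))
            rw [mul_smul, dist_smul]
        _ = B := by rw [hB]; ring
    have hdist : ∀ T : ℝ, 0 ≤ T → dist x₀ (ξ.1 T) = T := by
      intro T hT
      rw [← hξ0, ξ.2 0 T le_rfl hT, abs_of_nonpos (by linarith)]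
      ring
    clear_value v B
    refine ⟨ξ, hξ0, ?_, v, hvZ, ?_⟩
    · rw [← hζ]
      exact Quotient.sound ⟨D', hD'⟩
    · -- convergence
      intro r hr ε hε
      obtain ⟨n₀, hn₀⟩ := exists_nat_gt (r + B + 2*B*r/ε + 1)
      have hq0 : 0 ≤ 2*B*r/ε := by positivity
      refine ⟨n₀, fun i hi => ?_⟩
      have hui : (n₀:ℝ) ≤ (u i : ℝ) := by
        have h1 : n₀ ≤ u i := le_trans hi (le_of_lt (hu2 i))
        exact_mod_cast h1
      have hT0 : (0:ℝ) < (u i : ℝ) := by linarith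
      have hTr : r + B < (u i : ℝ) := by linarith
      have hlow : (u i : ℝ) - B ≤ dist x₀ (v i • x₀) := by
        have h1 : dist x₀ (ξ.1 ((u i : ℕ):ℝ)) ≤ dist x₀ (v i • x₀) +
            dist (v i • x₀) (ξ.1 ((u i : ℕ):ℝ)) := dist_triangle _ _ _
        rw [hdist _ hT0.le] at h1
        have := hvnear i
        linarith
      have h1 : r < dist x₀ (v i • x₀) := by linarith
      refine ⟨h1, fun γ hγ hγ0 hγe => ?_⟩
      have hfel := CAT0Aux.fellow hX ξ.2 hξ0 hT0 hB0 (hvnear i) hγ hγ0 hγe hr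
        (by linarith) (le_of_lt h1)
      have hlt : 2*B*r/(u i : ℝ) < ε := by
        rw [div_lt_iff₀ hT0]
        have h2 : 2*B*r/ε < (u i : ℝ) := by linarith
        rw [div_lt_iff₀ hε] at h2
        linarith
      exact lt_of_le_of_lt hfel hlt
  · -- limit set ⊆ fixed points
    rintro ⟨ξ, hξ0, hξα, v, hvZ, hconv⟩
    rw [← hξα]
    have hbs : boundarySMul g (Quotient.mk (raySetoid X) ξ) =
        Quotient.mk (raySetoid X) (smulRay g ξ) := rfl
    rw [hbs]
    apply Quotient.sound
    set C₀ := dist x₀ (g • x₀) with hC₀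
    have hC₀0 : 0 ≤ C₀ := dist_nonneg
    refine ⟨C₀ + 3, ?_⟩
    intro t ht
    show dist (g • ξ.1 t) (ξ.1 t) ≤ C₀ + 3
    rcases eq_or_lt_of_le ht with h0 | hpos
    · rw [← h0, hξ0, dist_comm]
      linarith
    · set R := t*C₀ + t + C₀ + 1 with hR
      have hR0 : 0 < R := by positivity
      obtain ⟨n₁, hn₁⟩ := hconv t hpos 1 one_pos
      obtain ⟨n₂, hn₂⟩ := hconv R hR0 1 one_pos
      set n := max n₁ n₂ with hn
      have h1 := hn₁ n (le_max_left _ _)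
      have h2 := hn₂ n (le_max_right _ _)
      simp only [] at h1 h2
      set y := v n • x₀ with hy
      set d := dist x₀ y with hd
      have htd : t < d := h1.1
      have hRd : R < d := h2.1
      have hd0 : 0 < d := lt_trans hpos htd
      obtain ⟨γ, hγ0, hγe, hγg⟩ := hX.1 x₀ y
      have E1 : dist (ξ.1 t) (γ t) < 1 := h1.2 γ hγg hγ0 hγe
      set gy := g • y with hgy
      have hyc : dist y gy = C₀ := by
        rw [hgy, hy, ← mul_smul, hvZ n, mul_smul, dist_smul, hC₀]
      set d' := dist x₀ gy with hd'
      have hd'0 : 0 ≤ d' := dist_nonneg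
      obtain ⟨δ, hδ0, hδe, hδg⟩ := hX.1 x₀ gy
      have hgγg : IsGeodesicOn (fun s => g • γ s) 0 d := by
        intro s hs u hu
        simp only []
        rw [dist_smul]
        exact hγg s hs u hu
      set uu := t / d with huu
      have hu0 : 0 ≤ uu := by positivity
      have hu1 : uu ≤ 1 := by rw [huu, div_le_one hd0]; exact htd.le
      have hud : uu * d = t := by rw [huu, div_mul_cancel₀ _ hd0.ne']
      have hE2conv := CAT0Aux.geodesic_convex hX hd0.le hd'0 hγg hδg hu0 hu1
      rw [hγ0, hδ0, dist_self, hγe, hδe, hud] at hE2conv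
      have E2 : dist (γ t) (δ (uu * d')) ≤ 1 := by
        have hb : uu * dist y gy ≤ 1 := by
          rw [hyc, huu]
          rw [div_mul_eq_mul_div, div_le_one hd0]
          nlinarith
        calc dist (γ t) (δ (uu * d'))
            ≤ (1 - uu) * 0 + uu * dist y gy := hE2conv
          _ = uu * dist y gy := by ring
          _ ≤ 1 := hb
      have hE3conv := CAT0Aux.geodesic_convex hX hd'0 hd0.le hδg hgγg hu0 hu1
      rw [hδ0, hδe, hud] at hE3conv
      have E3 : dist (δ (uu * d')) (g • γ t) ≤ C₀ := by
        rw [hγ0, hγe, ← hgy, dist_self] at hE3conv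
        calc dist (δ (uu * d')) (g • γ t)
            ≤ (1 - uu) * dist x₀ (g • x₀) + uu * 0 := hE3conv
          _ = (1 - uu) * C₀ := by rw [hC₀]; ring
          _ ≤ 1 * C₀ := by
              apply mul_le_mul_of_nonneg_right _ hC₀0
              linarith
          _ = C₀ := one_mul _
      have E4 : dist (g • γ t) (g • ξ.1 t) < 1 := by
        rw [dist_smul, dist_comm]
        exact E1
      calc dist (g • ξ.1 t) (ξ.1 t)
          ≤ dist (g • ξ.1 t) (g • γ t) + dist (g • γ t) (δ (uu * d')) +
            dist (δ (uu * d')) (γ t) + dist (γ t) (ξ.1 t) := by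
            have ht1 := dist_triangle4 (g • ξ.1 t) (g • γ t) (δ (uu * d')) (γ t)
            have ht2 := dist_triangle (g • ξ.1 t) (γ t) (ξ.1 t)
            linarith [dist_triangle (g • ξ.1 t) (δ (uu*d')) (γ t),
              dist_triangle (g • ξ.1 t) (g • γ t) (δ (uu*d'))]
        _ ≤ 1 + C₀ + 1 + 1 := by
            refine add_le_add (add_le_add (add_le_add ?_ ?_) ?_) ?_
            · rw [dist_comm]; exact E4.le
            · rw [dist_comm]; exact E3
            · rw [dist_comm]; exact E2
            · rw [dist_comm]; exact E1.le
        _ = C₀ + 3 := by ring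
end

section
/- Suppose a group G acts geometrically on a proper CAT(0) space X and let g ∈ G have infinite order. Then g is a hyperbolic isometry of X, and the fixed-point set of g in ∂X satisfies 𝓕_g = L(Z_g) = ∂Min(g); in particular 𝓕_g is nonempty (it contains the endpoints g^{±∞} of an axis of g). -/
/-- The translation length of the isometry of `X` given by the action of `g`. -/
noncomputable def tLenSMul (X : Type*) {G : Type*} [Group G] [MetricSpace X]
    [MulAction G X] (g : G) : ℝ :=
  ⨅ x : X, dist x (g • x)

/-- The minimal set of the isometry of `X` given by the action of `g`. -/
noncomputable def minSetSMul (X : Type*) {G : Type*} [Group G] [MetricSpace X]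
    [MulAction G X] (g : G) : Set X :=
  {x : X | dist x (g • x) = tLenSMul X g}


section CoreGeom

open Set

variable {X : Type*} [MetricSpace X]

/-- metric midpoint -/
def IsMid (x y m : X) : Prop := dist x m = dist x y / 2 ∧ dist y m = dist x y / 2

lemma IsMid.symm {x y m : X} (h : IsMid x y m) : IsMid y x m :=
  ⟨by rw [dist_comm y x]; exact h.2, by rw [dist_comm y x]; exact h.1⟩

lemma sq_le_sq_root {u v : ℝ} (hu : 0 ≤ u) (hv : 0 ≤ v) (h : u^2 ≤ v^2) : u ≤ v := by
  nlinarith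

lemma exists_mid (hX : CAT0 X) (x y : X) : ∃ m, IsMid x y m := by
  obtain ⟨γ, h0, h1, hgeo⟩ := hX.1 x y
  have hd : (0:ℝ) ≤ dist x y := dist_nonneg
  have hm : dist x y / 2 ∈ Icc (0:ℝ) (dist x y) := ⟨by linarith, by linarith⟩
  have e1 := hgeo 0 ⟨le_rfl, hd⟩ _ hm
  have e2 := hgeo (dist x y) ⟨hd, le_rfl⟩ _ hm
  rw [h0] at e1; rw [h1] at e2
  refine ⟨γ (dist x y / 2), ?_, ?_⟩
  · rw [e1, abs_of_nonpos (by linarith)]; ring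
  · rw [e2, abs_of_nonneg (by linarith)]; ring

/-- distance from a point to a midpoint -/
lemma dist_mid_le (hX : CAT0 X) {y z m : X} (x : X) (h : IsMid y z m) :
    dist x m ≤ (dist x y + dist x z) / 2 := by
  have h2 := hX.2 x y z m h.1 h.2
  have t1 := dist_triangle x y z
  have t2 := dist_triangle x z y
  have hyz : dist z y = dist y z := dist_comm _ _
  have hyz2 : dist y z ≥ 0 := dist_nonneg
  refine sq_le_sq_root dist_nonneg (by positivity) ?_
  nlinarith [dist_nonneg (x := x) (y := y), dist_nonneg (x := x) (y := z)]

/-- distance between midpoints with shared apex -/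
lemma mid_dist_mid_apex (hX : CAT0 X) {x y z m1 m2 : X}
    (h1 : IsMid x y m1) (h2 : IsMid x z m2) : dist m1 m2 ≤ dist y z / 2 := by
  have a := hX.2 m1 x z m2 h2.1 h2.2
  have b := hX.2 z x y m1 h1.1 h1.2
  have hx1 : dist m1 x = dist x y / 2 := by rw [dist_comm]; exact h1.1
  have hc : dist m1 z = dist z m1 := dist_comm _ _
  have hc2 : dist z x = dist x z := dist_comm _ _
  have hc3 : dist z y = dist y z := dist_comm _ _
  rw [hx1, hc] at a
  rw [hc2, hc3] at b
  refine sq_le_sq_root dist_nonneg (by positivity) ?_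
  nlinarith [a, b]

/-- distance between general midpoints -/
lemma mid_dist_mid (hX : CAT0 X) {x y x' y' m1 m2 : X}
    (h1 : IsMid x y m1) (h2 : IsMid x' y' m2) :
    dist m1 m2 ≤ (dist x x' + dist y y') / 2 := by
  obtain ⟨m3, hm3⟩ := exists_mid hX x y'
  have A : dist m1 m3 ≤ dist y y' / 2 := mid_dist_mid_apex hX h1 hm3
  have B : dist m3 m2 ≤ dist x x' / 2 := mid_dist_mid_apex hX hm3.symm h2.symm
  calc dist m1 m2 ≤ dist m1 m3 + dist m3 m2 := dist_triangle _ _ _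
    _ ≤ (dist x x' + dist y y') / 2 := by linarith

lemma IsGeodesicOn.mid {γ : ℝ → X} {a b : ℝ} (h : IsGeodesicOn γ a b)
    {s t : ℝ} (hs : s ∈ Icc a b) (ht : t ∈ Icc a b) :
    IsMid (γ s) (γ t) (γ ((s + t) / 2)) := by
  have hm : (s + t) / 2 ∈ Icc a b := ⟨by cases hs; cases ht; linarith, by cases hs; cases ht; linarith⟩
  constructor
  · rw [h s hs _ hm, h s hs t ht]
    rw [show s - (s+t)/2 = (s-t)/2 by ring, abs_div, abs_two]
  · rw [h t ht _ hm, h s hs t ht]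
    rw [show t - (s+t)/2 = (t-s)/2 by ring, abs_div, abs_two, abs_sub_comm t s]

lemma IsGeodesicOn.mono {γ : ℝ → X} {a b a' b' : ℝ} (h : IsGeodesicOn γ a b)
    (ha : a ≤ a') (hb : b' ≤ b) : IsGeodesicOn γ a' b' := fun s hs t ht =>
  h s ⟨ha.trans hs.1, hs.2.trans hb⟩ t ⟨ha.trans ht.1, ht.2.trans hb⟩

end CoreGeom
section Convexity

open Set Filter

variable {X : Type*} [MetricSpace X]

/-- Convexity of the distance between two geodesics (affine parametrization). -/
lemma geodesic_convex (hX : CAT0 X) {γ σ : ℝ → X} {L L' : ℝ} (hL : 0 ≤ L) (hL' : 0 ≤ L')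
    (hγ : IsGeodesicOn γ 0 L) (hσ : IsGeodesicOn σ 0 L') :
    ∀ t ∈ Icc (0:ℝ) 1, dist (γ (t * L)) (σ (t * L')) ≤
      (1 - t) * dist (γ 0) (σ 0) + t * dist (γ L) (σ L') := by
  obtain ⟨A, hA⟩ : ∃ A : ℝ, A = dist (γ 0) (σ 0) := ⟨_, rfl⟩
  obtain ⟨B, hB⟩ : ∃ B : ℝ, B = dist (γ L) (σ L') := ⟨_, rfl⟩
  obtain ⟨f, hf⟩ : ∃ f : ℝ → ℝ, f = fun t => dist (γ (t * L)) (σ (t * L')) - ((1 - t) * A + t * B) :=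
    ⟨_, rfl⟩
  suffices h : ∀ t ∈ Icc (0:ℝ) 1, f t ≤ 0 by
    intro t ht; have := h t ht; rw [hf] at this; simp only at this
    rw [← hA, ← hB]; linarith
  have hmem : ∀ t ∈ Icc (0:ℝ) 1, t * L ∈ Icc 0 L := fun t ht =>
    ⟨mul_nonneg ht.1 hL, mul_le_of_le_one_left hL ht.2⟩
  have hmem' : ∀ t ∈ Icc (0:ℝ) 1, t * L' ∈ Icc 0 L' := fun t ht =>
    ⟨mul_nonneg ht.1 hL', mul_le_of_le_one_left hL' ht.2⟩
  have hmid : ∀ s ∈ Icc (0:ℝ) 1, ∀ t ∈ Icc (0:ℝ) 1, f ((s + t) / 2) ≤ (f s + f t) / 2 := by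
    intro s hs t ht
    have m1 := hγ.mid (hmem s hs) (hmem t ht)
    have m2 := hσ.mid (hmem' s hs) (hmem' t ht)
    have key := mid_dist_mid hX m1 m2
    have e1 : (s * L + t * L) / 2 = ((s + t) / 2) * L := by ring
    have e2 : (s * L' + t * L') / 2 = ((s + t) / 2) * L' := by ring
    rw [e1, e2] at key
    simp only [hf]
    linarith
  have hf0 : f 0 = 0 := by simp [hf, ← hA]
  have hf1 : f 1 = 0 := by simp [hf, ← hB]
  obtain ⟨K, hK⟩ : ∃ K : ℝ, K = L + L' + |B - A| := ⟨_, rfl⟩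
  have hKnn : 0 ≤ K := by rw [hK]; positivity
  have hlip : ∀ s ∈ Icc (0:ℝ) 1, ∀ t ∈ Icc (0:ℝ) 1, f t ≤ f s + K * |t - s| := by
    intro s hs t ht
    have d1 : dist (γ (t * L)) (γ (s * L)) = |t - s| * L := by
      rw [hγ (t*L) (hmem t ht) (s*L) (hmem s hs), ← sub_mul, abs_mul, abs_of_nonneg hL]
    have d2 : dist (σ (s * L')) (σ (t * L')) = |t - s| * L' := by
      rw [hσ (s*L') (hmem' s hs) (t*L') (hmem' t ht), ← sub_mul, abs_mul, abs_of_nonneg hL',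
        abs_sub_comm]
    have tri : dist (γ (t * L)) (σ (t * L')) ≤
        dist (γ (t * L)) (γ (s * L)) + dist (γ (s * L)) (σ (s * L')) +
          dist (σ (s * L')) (σ (t * L')) := dist_triangle4 _ _ _ _
    have habs : (t - s) * (A - B) ≤ |t - s| * |B - A| := by
      calc (t - s) * (A - B) ≤ |(t - s) * (A - B)| := le_abs_self _
        _ = |t - s| * |B - A| := by rw [abs_mul, abs_sub_comm A B]
    rw [d1, d2] at tri
    simp only [hf]
    rw [hK]
    nlinarith [abs_nonneg (t - s), tri, habs]
  -- bisection
  have key : ∀ n : ℕ, ∀ t ∈ Icc (0:ℝ) 1, ∃ a b : ℝ, a ∈ Icc (0:ℝ) 1 ∧ b ∈ Icc (0:ℝ) 1 ∧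
      a ≤ t ∧ t ≤ b ∧ b - a = (2⁻¹:ℝ) ^ n ∧ f a ≤ 0 ∧ f b ≤ 0 := by
    intro n
    induction n with
    | zero => intro t ht
              exact ⟨0, 1, ⟨le_rfl, zero_le_one⟩, ⟨zero_le_one, le_rfl⟩, ht.1, ht.2, by norm_num,
                hf0.le, hf1.le⟩
    | succ n ih =>
        intro t ht
        obtain ⟨a, b, ha, hb, hat, htb, hab, hfa, hfb⟩ := ih t ht
        have hm : (a + b) / 2 ∈ Icc (0:ℝ) 1 := ⟨by cases ha; cases hb; linarith,
          by cases ha; cases hb; linarith⟩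
        have hfm : f ((a + b) / 2) ≤ 0 := by
          have := hmid a ha b hb; linarith
        rcases le_total t ((a + b) / 2) with h | h
        · exact ⟨a, (a + b) / 2, ha, hm, hat, h, by rw [pow_succ]; linarith, hfa, hfm⟩
        · exact ⟨(a + b) / 2, b, hm, hb, h, htb, by rw [pow_succ]; linarith, hfm, hfb⟩
  intro t ht
  have hbound : ∀ n : ℕ, f t ≤ K * (2⁻¹:ℝ) ^ n := by
    intro n
    obtain ⟨a, b, ha, _, hat, htb, hab, hfa, _⟩ := key n t ht
    have := hlip a ha t ht
    have habs : |t - a| ≤ (2⁻¹:ℝ) ^ n := by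
      rw [abs_of_nonneg (by linarith)]; linarith
    have : f t ≤ f a + K * (2⁻¹:ℝ)^n := by nlinarith
    linarith
  have htend : Tendsto (fun n : ℕ => K * (2⁻¹:ℝ) ^ n) atTop (nhds 0) := by
    have := tendsto_pow_atTop_nhds_zero_of_lt_one (by norm_num : (0:ℝ) ≤ 2⁻¹) (by norm_num)
    simpa using this.const_mul K
  exact ge_of_tendsto' htend hbound

/-- A midpoint-convex bounded function on `[0,∞)` is bounded by its value at 0. -/
lemma midconvex_bounded_le {f : ℝ → ℝ}
    (hmid : ∀ s t : ℝ, 0 ≤ s → 0 ≤ t → f ((s + t) / 2) ≤ (f s + f t) / 2)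
    {N : ℝ} (hbd : ∀ t, 0 ≤ t → f t ≤ N) : ∀ t, 0 ≤ t → f t ≤ f 0 := by
  intro b hb
  by_contra hlt
  push_neg at hlt
  set δ := f b - f 0 with hδ
  have hδpos : 0 < δ := by simp only [hδ]; linarith
  have step : ∀ k : ℕ, f ((k : ℝ) * b) + δ ≤ f (((k : ℝ) + 1) * b) := by
    intro k
    induction k with
    | zero => simp [hδ]
    | succ k ih =>
        have hmk := hmid ((k : ℝ) * b) (((k : ℝ) + 2) * b)
          (by positivity) (by positivity)
        have e : ((k : ℝ) * b + ((k : ℝ) + 2) * b) / 2 = ((k : ℝ) + 1) * b := by ring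
        rw [e] at hmk
        push_cast
        have e2 : (k : ℝ) + 1 + 1 = (k : ℝ) + 2 := by ring
        rw [e2]
        linarith
  have chain : ∀ k : ℕ, f 0 + (k : ℝ) * δ ≤ f ((k : ℝ) * b) := by
    intro k
    induction k with
    | zero => simp
    | succ k ih =>
        have := step k
        push_cast
        push_cast at ih this
        linarith
  obtain ⟨k, hk⟩ := exists_nat_gt ((N - f 0) / δ)
  have := chain k
  have hfk := hbd ((k : ℝ) * b) (by positivity)
  have : (k : ℝ) * δ ≤ N - f 0 := by linarith
  have : (N - f 0) / δ ≥ (k : ℝ) := by rw [ge_iff_le, le_div_iff₀ hδpos]; linarith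
  linarith

end Convexity
section AsymptoticRay

open Set Filter

variable {X : Type*} [MetricSpace X]

lemma GeodesicRay.isGeodesicOn {ξ : ℝ → X} (h : GeodesicRay ξ) {b : ℝ} :
    IsGeodesicOn ξ 0 b := fun s hs t ht => h s t hs.1 ht.1

/-- From any basepoint there is a ray asymptotic to a given ray (explicit bound `2B`). -/
lemma exists_asymptotic_ray (hX : CAT0 X) [ProperSpace X] {ξ₀ : ℝ → X}
    (hray : GeodesicRay ξ₀) (x : X) :
    ∃ ξ : ℝ → X, GeodesicRay ξ ∧ ξ 0 = x ∧
      ∀ t, 0 ≤ t → dist (ξ t) (ξ₀ t) ≤ 2 * dist x (ξ₀ 0) := by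
  obtain ⟨B, hB⟩ : ∃ B : ℝ, B = dist x (ξ₀ 0) := ⟨_, rfl⟩
  have hBnn : 0 ≤ B := hB ▸ dist_nonneg
  have hdist0 : ∀ n : ℕ, dist (ξ₀ 0) (ξ₀ n) = (n : ℝ) := by
    intro n
    rw [hray 0 n le_rfl n.cast_nonneg, zero_sub, abs_neg, abs_of_nonneg n.cast_nonneg]
  have hDlow : ∀ n : ℕ, (n : ℝ) - B ≤ dist x (ξ₀ n) := by
    intro n
    have h2 := dist_triangle (ξ₀ 0) x (ξ₀ (n:ℝ))
    rw [hdist0 n, dist_comm (ξ₀ 0) x, ← hB] at h2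
    linarith
  have hDup : ∀ n : ℕ, dist x (ξ₀ n) ≤ B + n := by
    intro n
    have h2 := dist_triangle x (ξ₀ 0) (ξ₀ (n:ℝ))
    rw [hdist0 n, ← hB] at h2
    linarith
  have habsD : ∀ n : ℕ, |(n : ℝ) - dist x (ξ₀ n)| ≤ B := by
    intro n; rw [abs_le]; constructor
    · linarith [hDup n]
    · linarith [hDlow n]
  choose γ hγ0 hγe hγg using fun n : ℕ => hX.1 x (ξ₀ (n : ℝ))
  have key1 : ∀ n : ℕ, ∀ s : ℝ, 0 ≤ s → s ≤ dist x (ξ₀ n) → 0 < dist x (ξ₀ n) →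
      dist (γ n s) (ξ₀ s) ≤ B + s * B / dist x (ξ₀ n) := by
    intro n s hs hsD hD
    have htd : (0:ℝ) ≤ s / dist x (ξ₀ n) := div_nonneg hs hD.le
    have ht : s / dist x (ξ₀ n) ∈ Icc (0:ℝ) 1 := ⟨htd, (div_le_one hD).2 hsD⟩
    have hconv := geodesic_convex hX dist_nonneg n.cast_nonneg (hγg n)
      (hray.isGeodesicOn (b := (n:ℝ))) _ ht
    rw [hγ0, hγe, div_mul_cancel₀ _ hD.ne', ← hB] at hconv
    simp only [dist_self] at hconv
    have h2 : dist (ξ₀ (s / dist x (ξ₀ n) * n)) (ξ₀ s)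
        = s / dist x (ξ₀ n) * |(n:ℝ) - dist x (ξ₀ n)| := by
      rw [hray _ s (mul_nonneg htd n.cast_nonneg) hs]
      rw [show s / dist x (ξ₀ n) * n - s = s / dist x (ξ₀ n) * ((n:ℝ) - dist x (ξ₀ n)) by
        field_simp]
      rw [abs_mul, abs_of_nonneg htd]
    have h3 : s / dist x (ξ₀ n) * |(n:ℝ) - dist x (ξ₀ n)| ≤ s * B / dist x (ξ₀ n) := by
      calc s / dist x (ξ₀ n) * |(n:ℝ) - dist x (ξ₀ n)| ≤ s / dist x (ξ₀ n) * B :=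
            mul_le_mul_of_nonneg_left (habsD n) htd
        _ = s * B / dist x (ξ₀ n) := by ring
    calc dist (γ n s) (ξ₀ s) ≤ dist (γ n s) (ξ₀ (s / dist x (ξ₀ n) * n)) +
        dist (ξ₀ (s / dist x (ξ₀ n) * n)) (ξ₀ s) := dist_triangle _ _ _
      _ ≤ (1 - s / dist x (ξ₀ n)) * B + s * B / dist x (ξ₀ n) := by
          rw [h2]; linarith [hconv, h3]
      _ ≤ B + s * B / dist x (ξ₀ n) := by nlinarith [mul_nonneg htd hBnn]
  have key2 : ∀ n m : ℕ, ∀ s : ℝ, 0 ≤ s → s ≤ dist x (ξ₀ n) → 0 < dist x (ξ₀ n) →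
      0 < dist x (ξ₀ m) → s ≤ dist x (ξ₀ m) → (n : ℝ) ≤ dist x (ξ₀ m) →
      dist (γ n s) (γ m s) ≤ 3 * B * s / dist x (ξ₀ n) := by
    intro n m s hs hsD hD hDm hsDm hnDm
    have htd : (0:ℝ) ≤ s / dist x (ξ₀ n) := div_nonneg hs hD.le
    have ht : s / dist x (ξ₀ n) ∈ Icc (0:ℝ) 1 := ⟨htd, (div_le_one hD).2 hsD⟩
    have hσ : IsGeodesicOn (γ m) 0 (n : ℝ) := (hγg m).mono le_rfl hnDm
    have hconv := geodesic_convex hX dist_nonneg n.cast_nonneg (hγg n) hσ _ ht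
    rw [hγ0, hγ0, hγe, div_mul_cancel₀ _ hD.ne'] at hconv
    simp only [dist_self] at hconv
    have hE : dist (ξ₀ n) (γ m n) ≤ 2 * B := by
      rw [dist_comm]
      have h1 := key1 m n n.cast_nonneg hnDm hDm
      have h4 : (n:ℝ) * B / dist x (ξ₀ m) ≤ B := by
        rw [div_le_iff₀ hDm]
        nlinarith [mul_le_mul_of_nonneg_right hnDm hBnn]
      linarith
    have hstep1 : dist (γ n s) (γ m (s / dist x (ξ₀ n) * n)) ≤ 2 * B * s / dist x (ξ₀ n) := by
      have h5 : s / dist x (ξ₀ n) * dist (ξ₀ n) (γ m n) ≤ s / dist x (ξ₀ n) * (2 * B) :=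
        mul_le_mul_of_nonneg_left hE htd
      calc dist (γ n s) (γ m (s / dist x (ξ₀ n) * n))
          ≤ (1 - s / dist x (ξ₀ n)) * 0 + s / dist x (ξ₀ n) * dist (ξ₀ n) (γ m n) := hconv
        _ ≤ s / dist x (ξ₀ n) * (2 * B) := by linarith
        _ = 2 * B * s / dist x (ξ₀ n) := by ring
    have hmem1 : s / dist x (ξ₀ n) * n ∈ Icc (0:ℝ) (dist x (ξ₀ m)) :=
      ⟨mul_nonneg htd n.cast_nonneg, le_trans (mul_le_of_le_one_left n.cast_nonneg ht.2) hnDm⟩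
    have hstep2 : dist (γ m (s / dist x (ξ₀ n) * n)) (γ m s) ≤ B * s / dist x (ξ₀ n) := by
      rw [hγg m _ hmem1 s ⟨hs, hsDm⟩]
      rw [show s / dist x (ξ₀ n) * n - s = s / dist x (ξ₀ n) * ((n:ℝ) - dist x (ξ₀ n)) by
        field_simp]
      rw [abs_mul, abs_of_nonneg htd]
      calc s / dist x (ξ₀ n) * |(n:ℝ) - dist x (ξ₀ n)| ≤ s / dist x (ξ₀ n) * B :=
            mul_le_mul_of_nonneg_left (habsD n) htd
        _ = B * s / dist x (ξ₀ n) := by ring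
    calc dist (γ n s) (γ m s) ≤ dist (γ n s) (γ m (s / dist x (ξ₀ n) * n)) +
          dist (γ m (s / dist x (ξ₀ n) * n)) (γ m s) := dist_triangle _ _ _
      _ ≤ 2 * B * s / dist x (ξ₀ n) + B * s / dist x (ξ₀ n) := by linarith
      _ = 3 * B * s / dist x (ξ₀ n) := by ring
  have hcauchy : ∀ s : ℝ, 0 ≤ s → CauchySeq (fun n : ℕ => γ n s) := by
    intro s hs
    rw [Metric.cauchySeq_iff]
    intro ε hε
    obtain ⟨N, hN⟩ := exists_nat_gt (s + B + 1 + 6 * B * s / ε)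
    have hεsnn : (0:ℝ) ≤ 6 * B * s / ε :=
      div_nonneg (by nlinarith) hε.le
    refine ⟨N, fun m hm n hn => ?_⟩
    have hDbig : ∀ j : ℕ, j ≥ N → s + 1 + 6 * B * s / ε < dist x (ξ₀ j) := by
      intro j hj
      have h1 := hDlow j
      have hj' : (N : ℝ) ≤ (j : ℝ) := Nat.cast_le.2 hj
      linarith
    have hDn := hDbig n hn
    have hDm := hDbig m hm
    have hDnpos : 0 < dist x (ξ₀ n) := by linarith
    have hDmpos : 0 < dist x (ξ₀ m) := by linarith
    have hsn : s ≤ dist x (ξ₀ n) := by linarith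
    have hsm : s ≤ dist x (ξ₀ m) := by linarith
    obtain ⟨k, hk⟩ := exists_nat_gt ((m : ℝ) + (n : ℝ) + s + B + 1)
    have hklow := hDlow k
    have hmnn : (0:ℝ) ≤ (m:ℝ) := m.cast_nonneg
    have hnnn : (0:ℝ) ≤ (n:ℝ) := n.cast_nonneg
    have hDkpos : 0 < dist x (ξ₀ k) := by linarith
    have hsk : s ≤ dist x (ξ₀ k) := by linarith
    have hnk : (n:ℝ) ≤ dist x (ξ₀ k) := by linarith
    have hmk : (m:ℝ) ≤ dist x (ξ₀ k) := by linarith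
    have b1 := key2 n k s hs hsn hDnpos hDkpos hsk hnk
    have b2 := key2 m k s hs hsm hDmpos hDkpos hsk hmk
    have half : ∀ j : ℕ, 0 < dist x (ξ₀ j) → s + 1 + 6 * B * s / ε < dist x (ξ₀ j) →
        3 * B * s / dist x (ξ₀ j) < ε / 2 := by
      intro j hpos hbig
      rw [div_lt_iff₀ hpos]
      have hkey : ε / 2 * (6 * B * s / ε) = 3 * B * s := by field_simp; ring
      have hmul := mul_lt_mul_of_pos_left hbig (half_pos hε)
      nlinarith [mul_pos (half_pos hε) (show (0:ℝ) < s + 1 by linarith)]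
    calc dist (γ m s) (γ n s) ≤ dist (γ m s) (γ k s) + dist (γ k s) (γ n s) :=
          dist_triangle _ _ _
      _ = dist (γ m s) (γ k s) + dist (γ n s) (γ k s) := by rw [dist_comm (γ k s)]
      _ < ε / 2 + ε / 2 := by
          have := half n hDnpos hDn
          have := half m hDmpos hDm
          have := hεsnn
          linarith
      _ = ε := by ring
  have hlim : ∀ s : ℝ, 0 ≤ s → ∃ y, Tendsto (fun n : ℕ => γ n s) atTop (nhds y) :=
    fun s hs => cauchySeq_tendsto_of_complete (hcauchy s hs)
  choose ξf hξf using hlim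
  set ξ : ℝ → X := fun s => if hs : 0 ≤ s then ξf s hs else x with hξdef
  have htend : ∀ s : ℝ, ∀ hs : 0 ≤ s, Tendsto (fun n : ℕ => γ n s) atTop (nhds (ξ s)) := by
    intro s hs
    have : ξ s = ξf s hs := by simp only [hξdef, dif_pos hs]
    rw [this]
    exact hξf s hs
  have hbig : ∀ s : ℝ, 0 ≤ s → ∀ᶠ n : ℕ in atTop, s ≤ dist x (ξ₀ n) ∧ 0 < dist x (ξ₀ n) := by
    intro s hs
    obtain ⟨N, hN⟩ := exists_nat_gt (s + B + 1)
    refine eventually_atTop.2 ⟨N, fun n hn => ?_⟩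
    have h1 := hDlow n
    have hn' : (N:ℝ) ≤ (n:ℝ) := Nat.cast_le.2 hn
    constructor <;> linarith
  refine ⟨ξ, ?_, ?_, ?_⟩
  · intro s t hs ht
    have h1 := (htend s hs).dist (htend t ht)
    have h2 : (fun n : ℕ => dist (γ n s) (γ n t)) =ᶠ[atTop] fun _ => |s - t| := by
      filter_upwards [hbig s hs, hbig t ht] with n hn1 hn2
      exact hγg n s ⟨hs, hn1.1⟩ t ⟨ht, hn2.1⟩
    exact tendsto_nhds_unique (h1.congr' h2) tendsto_const_nhds
  · have h1 := htend 0 le_rfl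
    have h2 : (fun n : ℕ => γ n 0) =ᶠ[atTop] fun _ => x := Eventually.of_forall (fun n => hγ0 n)
    exact tendsto_nhds_unique (h1.congr' h2) tendsto_const_nhds
  · intro t htt
    have h1 := (htend t htt).dist (tendsto_const_nhds (x := ξ₀ t) (f := atTop (α := ℕ)))
    refine le_of_tendsto h1 ?_
    filter_upwards [hbig t htt] with n hn
    have h2 := key1 n t htt hn.1 hn.2
    have h4 : t * B / dist x (ξ₀ n) ≤ B := by
      rw [div_le_iff₀ hn.2]
      nlinarith [mul_le_mul_of_nonneg_right hn.1 hBnn]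
    rw [← hB]
    linarith

end AsymptoticRay
section Concat

open Set

variable {X : Type*} [MetricSpace X]

/-- A path geodesic on `[0,b]` and on `[a,c]` (overlapping) is geodesic on `[0,c]`. -/
lemma geodesic_extend (hX : CAT0 X) {η : ℝ → X} {a b c : ℝ} (ha : 0 ≤ a) (hab : a < b)
    (hbc : b ≤ c) (h1 : IsGeodesicOn η 0 b) (h2 : IsGeodesicOn η a c) :
    IsGeodesicOn η 0 c := by
  have hac : a ≤ c := le_trans (le_of_lt hab) hbc
  have fid : ∀ t ∈ Icc (0:ℝ) b, dist (η 0) (η t) = t := by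
    intro t ht
    rw [h1 0 ⟨le_rfl, by linarith⟩ t ht, abs_of_nonpos (by linarith [ht.1])]
    ring
  have fupper : ∀ t ∈ Icc a c, dist (η 0) (η t) ≤ t := by
    intro t ht
    have e1 : dist (η 0) (η a) = a := fid a ⟨ha, hab.le⟩
    have e2 : dist (η a) (η t) = t - a := by
      rw [h2 a ⟨le_rfl, hac⟩ t ht, abs_of_nonpos (by linarith [ht.1])]; ring
    calc dist (η 0) (η t) ≤ dist (η 0) (η a) + dist (η a) (η t) := dist_triangle _ _ _
      _ = t := by rw [e1, e2]; ring
  have fmid : ∀ s ∈ Icc a c, ∀ t ∈ Icc a c,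
      dist (η 0) (η ((s + t) / 2)) ≤ (dist (η 0) (η s) + dist (η 0) (η t)) / 2 :=
    fun s hs t ht => dist_mid_le hX (η 0) (h2.mid hs ht)
  have main : ∀ k : ℕ, ∀ t ∈ Icc a c, t ≤ b + k * (b - a) → t ≤ dist (η 0) (η t) := by
    intro k
    induction k with
    | zero =>
        intro t ht hk
        simp only [Nat.cast_zero, zero_mul, add_zero] at hk
        exact (fid t ⟨by linarith [ht.1], hk⟩).ge
    | succ k ih =>
        intro t ht hk
        rcases le_or_gt t (b + k * (b - a)) with h | h
        · exact ih t ht h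
        · push_cast at hk
          rcases Nat.eq_zero_or_pos k with rfl | hkpos
          · simp only [Nat.cast_zero, zero_mul, add_zero] at h
            push_cast at hk
            have hu : 2 * b - t ∈ Icc a c := ⟨by linarith, by linarith⟩
            have hmid := fmid (2 * b - t) hu t ht
            rw [show (2 * b - t + t) / 2 = b by ring] at hmid
            rw [fid b ⟨by linarith, le_rfl⟩, fid (2 * b - t) ⟨by linarith, by linarith⟩] at hmid
            linarith
          · have hk1 : (1:ℝ) ≤ (k:ℝ) := by exact_mod_cast hkpos
            have hs : t - (b - a) ∈ Icc a c := ⟨by nlinarith, by linarith [ht.2]⟩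
            have hu : t - 2 * (b - a) ∈ Icc a c := ⟨by nlinarith, by linarith [ht.2]⟩
            have hsle : t - (b - a) ≤ b + k * (b - a) := by linarith
            have ihs := ih (t - (b - a)) hs hsle
            have hupp := fupper (t - 2 * (b - a)) hu
            have hmid := fmid (t - 2 * (b - a)) hu t ht
            rw [show (t - 2 * (b - a) + t) / 2 = t - (b - a) by ring] at hmid
            linarith
  have ftotal : ∀ t ∈ Icc (0:ℝ) c, dist (η 0) (η t) = t := by
    intro t ht
    rcases le_or_gt t b with h | h
    · exact fid t ⟨ht.1, h⟩
    · obtain ⟨k, hkk⟩ := exists_nat_gt ((c - b) / (b - a))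
      have hcb : c - b < k * (b - a) := by
        rw [div_lt_iff₀ (by linarith)] at hkk
        linarith
      have h1' := main k t ⟨by linarith, ht.2⟩ (by linarith [ht.2])
      exact le_antisymm (fupper t ⟨by linarith, ht.2⟩) h1'
  -- conclude
  have upper : ∀ s ∈ Icc (0:ℝ) c, ∀ t ∈ Icc (0:ℝ) c, s ≤ t → dist (η s) (η t) ≤ t - s := by
    intro s hs t ht hst
    rcases le_or_gt t b with h | h
    · rw [h1 s ⟨hs.1, by linarith⟩ t ⟨ht.1, h⟩, abs_of_nonpos (by linarith)]; linarith
    · rcases le_or_gt a s with h' | h'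
      · rw [h2 s ⟨h', hs.2⟩ t ⟨by linarith, ht.2⟩, abs_of_nonpos (by linarith)]; linarith
      · have e1 : dist (η s) (η a) = a - s := by
          rw [h1 s ⟨hs.1, by linarith⟩ a ⟨ha, hab.le⟩, abs_of_nonpos (by linarith)]; ring
        have e2 : dist (η a) (η t) = t - a := by
          rw [h2 a ⟨le_rfl, hac⟩ t ⟨by linarith, ht.2⟩, abs_of_nonpos (by linarith)]; ring
        calc dist (η s) (η t) ≤ dist (η s) (η a) + dist (η a) (η t) := dist_triangle _ _ _
          _ = t - s := by rw [e1, e2]; ring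
  have lower : ∀ s ∈ Icc (0:ℝ) c, ∀ t ∈ Icc (0:ℝ) c, s ≤ t → t - s ≤ dist (η s) (η t) := by
    intro s hs t ht hst
    have e1 := ftotal t ht
    have e2 := ftotal s hs
    have := dist_triangle (η 0) (η s) (η t)
    linarith
  intro s hs t ht
  rcases le_total s t with h | h
  · rw [abs_of_nonpos (by linarith)]
    have := upper s hs t ht h
    have := lower s hs t ht h
    linarith [abs_of_nonpos (show s - t ≤ 0 by linarith)]
  · rw [dist_comm, abs_sub_comm]
    rw [abs_of_nonpos (by linarith)]
    have := upper t ht s hs h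
    have := lower t ht s hs h
    linarith

end Concat
section GroupLemmas

open Set Filter

lemma nat_set_unbounded {S : Set ℕ} (h : S.Infinite) (m : ℕ) : ∃ n ∈ S, m ≤ n := by
  by_contra hc
  push_neg at hc
  exact h ((Set.finite_Iio m).subset (fun n hn => hc n hn))

lemma exists_infinite_fiber' {α : Type*} {f : ℕ → α} {F : Set α} (hF : F.Finite)
    (hmem : ∀ n, f n ∈ F) : ∃ u ∈ F, {n : ℕ | f n = u}.Infinite := by
  by_contra hc
  push_neg at hc
  have hfin : (⋃ u ∈ F, {n : ℕ | f n = u}).Finite :=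
    hF.biUnion (fun u hu => (hc u hu))
  have huniv : (Set.univ : Set ℕ) ⊆ ⋃ u ∈ F, {n : ℕ | f n = u} := by
    intro n _
    exact Set.mem_biUnion (hmem n) rfl
  exact Set.infinite_univ (hfin.subset huniv)

variable {G : Type*} {X : Type*} [Group G] [MetricSpace X] [MulAction G X] [IsIsometricSMul G X]

lemma smul_isometry (u : G) : Isometry (fun z : X => u • z) :=
  Isometry.of_dist_eq (fun a b => dist_smul u a b)

lemma tLen_le (g : G) (x : X) : tLenSMul X g ≤ dist x (g • x) :=
  ciInf_le ⟨0, by rintro _ ⟨y, rfl⟩; exact dist_nonneg⟩ x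

lemma tLen_nonneg (g : G) : 0 ≤ tLenSMul X g :=
  Real.iInf_nonneg fun _ => dist_nonneg

lemma dist_conj_smul (h v : G) (x : X) :
    dist x ((v⁻¹ * h * v) • x) = dist (v • x) (h • (v • x)) := by
  have e : (v⁻¹ * h * v) • x = v⁻¹ • (h • (v • x)) := by
    rw [mul_smul, mul_smul]
  rw [e]
  conv_lhs => rw [show x = v⁻¹ • (v • x) by rw [inv_smul_smul]]
  rw [dist_smul, smul_inv_smul]

lemma tLen_conj (g v : G) [Nonempty X] : tLenSMul X (v⁻¹ * g * v) = tLenSMul X g := by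
  have key : ∀ (h w : G), tLenSMul X (w⁻¹ * h * w) ≤ tLenSMul X h := by
    intro h w
    refine le_ciInf (fun x => ?_)
    have := tLen_le (X := X) (w⁻¹ * h * w) (w⁻¹ • x)
    rwa [dist_conj_smul h w (w⁻¹ • x), smul_inv_smul] at this
  refine le_antisymm (key g v) ?_
  have h2 := key (v⁻¹ * g * v) v⁻¹
  have e : v⁻¹⁻¹ * (v⁻¹ * g * v) * v⁻¹ = g := by group
  rwa [e] at h2

/-- Semisimplicity: for a geometric action the infimum of displacement is attained. -/
lemma minSet_nonempty [ProperSpace X] (hproper : ProperAction G X)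
    (hcocompact : CocompactAction G X) (g : G) (x₀ : X) :
    (minSetSMul X g).Nonempty := by
  haveI : Nonempty X := ⟨x₀⟩
  obtain ⟨τ, hτ⟩ : ∃ τ : ℝ, τ = tLenSMul X g := ⟨_, rfl⟩
  have hτle : ∀ x : X, τ ≤ dist x (g • x) := fun x => hτ ▸ tLen_le g x
  have hseq : ∀ n : ℕ, ∃ x : X, dist x (g • x) < τ + 1 / (n + 1) := by
    intro n
    have hlt : tLenSMul X g < τ + 1 / (n + 1) := by
      rw [← hτ]
      have : (0:ℝ) < 1 / (n + 1) := by positivity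
      linarith
    exact exists_lt_of_ciInf_lt hlt
  choose xs hxs using hseq
  obtain ⟨N, hNpos, hcov⟩ := hcocompact x₀
  choose w hw using fun n => hcov (xs n)
  have hyx : ∀ n, dist x₀ ((w n)⁻¹ • xs n) ≤ N := by
    intro n
    have : dist x₀ ((w n)⁻¹ • xs n) = dist (w n • x₀) (xs n) := by
      conv_lhs => rw [show x₀ = (w n)⁻¹ • (w n • x₀) by rw [inv_smul_smul]]
      rw [dist_smul]
    rw [this]; exact hw n
  have hdisp : ∀ n, dist ((w n)⁻¹ • xs n) (((w n)⁻¹ * g * w n) • ((w n)⁻¹ • xs n))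
      = dist (xs n) (g • xs n) := by
    intro n
    rw [dist_conj_smul g (w n) ((w n)⁻¹ • xs n), smul_inv_smul]
  have hbound : ∀ n, dist x₀ (((w n)⁻¹ * g * w n) • x₀) ≤ 2 * N + τ + 1 := by
    intro n
    have h1 := dist_triangle4 x₀ ((w n)⁻¹ • xs n) (((w n)⁻¹ * g * w n) • ((w n)⁻¹ • xs n))
      (((w n)⁻¹ * g * w n) • x₀)
    have h2 : dist (((w n)⁻¹ * g * w n) • ((w n)⁻¹ • xs n)) (((w n)⁻¹ * g * w n) • x₀)
        = dist ((w n)⁻¹ • xs n) x₀ := dist_smul _ _ _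
    have h3 : (1:ℝ) / (n + 1) ≤ 1 := by
      rw [div_le_one (by positivity)]
      have : (0:ℝ) ≤ (n:ℝ) := n.cast_nonneg
      linarith
    have h4 := hxs n
    rw [h2, dist_comm ((w n)⁻¹ • xs n) x₀] at h1
    rw [hdisp n] at h1
    linarith [hyx n]
  obtain ⟨u, huF, hufib⟩ := exists_infinite_fiber' (hproper x₀ (2 * N + τ + 1)) hbound
  obtain ⟨n₀, hn₀⟩ := hufib.nonempty
  have hu_conj : u = (w n₀)⁻¹ * g * w n₀ := hn₀.symm
  have hτu : tLenSMul X u = τ := by rw [hu_conj, tLen_conj, hτ]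
  have hcomp := isCompact_closedBall x₀ N
  have hcont : ContinuousOn (fun y : X => dist y (u • y)) (Metric.closedBall x₀ N) :=
    (continuous_id.dist (smul_isometry u).continuous).continuousOn
  have hne : (Metric.closedBall x₀ N).Nonempty := ⟨x₀, by
    rw [Metric.mem_closedBall, dist_self]; linarith⟩
  obtain ⟨z, hz, hzmin⟩ := hcomp.exists_isMinOn hne hcont
  have hzτ : dist z (u • z) = τ := by
    refine le_antisymm ?_ (by rw [← hτu]; exact tLen_le u z)
    refine le_of_forall_pos_le_add (fun ε hε => ?_)
    obtain ⟨M, hM⟩ := exists_nat_gt (1 / ε)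
    obtain ⟨n, hnfib, hnM⟩ := nat_set_unbounded hufib M
    have hyball : (w n)⁻¹ • xs n ∈ Metric.closedBall x₀ N := by
      rw [Metric.mem_closedBall, dist_comm]; exact hyx n
    have h5 := hzmin hyball
    have h6 : dist ((w n)⁻¹ • xs n) (u • ((w n)⁻¹ • xs n)) = dist (xs n) (g • xs n) := by
      rw [← hnfib]; exact hdisp n
    have h7 : (1:ℝ) / (n + 1) < ε := by
      rw [div_lt_iff₀ (by positivity)]
      have h8 : 1 / ε < (n:ℝ) + 1 := by
        have : (M:ℝ) ≤ (n:ℝ) := Nat.cast_le.2 hnM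
        linarith
      rw [div_lt_iff₀ hε] at h8
      linarith [mul_pos hε (show (0:ℝ) < (n:ℝ)+1 by positivity)]
    have h9 := hxs n
    simp only [IsMinOn, IsMinFilter] at h5
    calc dist z (u • z) ≤ dist ((w n)⁻¹ • xs n) (u • ((w n)⁻¹ • xs n)) := h5
      _ = dist (xs n) (g • xs n) := h6
      _ ≤ τ + ε := by linarith
  refine ⟨w n₀ • z, ?_⟩
  show dist (w n₀ • z) (g • (w n₀ • z)) = tLenSMul X g
  rw [← hτ, ← hzτ, hu_conj, dist_conj_smul g (w n₀) z]

lemma tLen_pos (hproper : ProperAction G X) (g : G) (hg : ¬ IsOfFinOrder g)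
    (hmin : (minSetSMul X g).Nonempty) : 0 < tLenSMul X g := by
  rcases lt_or_eq_of_le (tLen_nonneg (X := X) g) with h | h
  · exact h
  exfalso
  obtain ⟨x, hx⟩ := hmin
  have hfix : g • x = x := by
    have : dist x (g • x) = 0 := by rw [hx, ← h]
    rw [dist_comm, dist_eq_zero] at this
    exact this
  have hpow : ∀ n : ℕ, g ^ n • x = x := by
    intro n
    induction n with
    | zero => simp
    | succ n ih => rw [pow_succ, mul_smul, hfix, ih]
  have hinj : Function.Injective (fun n : ℕ => g ^ n) :=
    injective_pow_iff_not_isOfFinOrder.mpr hg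
  have hmem : ∀ n : ℕ, g ^ n ∈ {h : G | dist x (h • x) ≤ 0} := by
    intro n
    simp only [Set.mem_setOf_eq, hpow n, dist_self, le_refl]
  exact (Set.infinite_of_injective_forall_mem hinj hmem) (hproper x 0)

end GroupLemmas
section ZgAxis

open Set Filter

variable {G : Type*} {X : Type*} [Group G] [MetricSpace X] [MulAction G X] [IsIsometricSMul G X]

/-- The centralizer acts cocompactly on the minimal set. -/
lemma zg_cocompact (hproper : ProperAction G X) (hcocompact : CocompactAction G X)
    (g : G) (x' : X) :
    ∃ M : ℝ, ∀ y ∈ minSetSMul X g, ∃ v ∈ Zg g, dist (v • x') y ≤ M := by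
  obtain ⟨τ, hτ⟩ : ∃ τ : ℝ, τ = tLenSMul X g := ⟨_, rfl⟩
  by_contra hcon
  push_neg at hcon
  have hsel : ∀ n : ℕ, ∃ y ∈ minSetSMul X g, ∀ v ∈ Zg g, (n:ℝ) < dist (v • x') y := by
    intro n
    obtain ⟨y, hy, hfar⟩ := hcon n
    exact ⟨y, hy, hfar⟩
  choose ys hysmem hysfar using hsel
  obtain ⟨N, hNpos, hcov⟩ := hcocompact x'
  choose w hw using fun n => hcov (ys n)
  have hyx : ∀ n, dist x' ((w n)⁻¹ • ys n) ≤ N := by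
    intro n
    have e : dist x' ((w n)⁻¹ • ys n) = dist (w n • x') (ys n) := by
      conv_lhs => rw [show x' = (w n)⁻¹ • (w n • x') by rw [inv_smul_smul]]
      rw [dist_smul]
    rw [e]; exact hw n
  have hdisp : ∀ n, dist ((w n)⁻¹ • ys n) (((w n)⁻¹ * g * w n) • ((w n)⁻¹ • ys n)) = τ := by
    intro n
    rw [dist_conj_smul g (w n) ((w n)⁻¹ • ys n), smul_inv_smul, hτ]
    exact hysmem n
  have hbound : ∀ n, dist x' (((w n)⁻¹ * g * w n) • x') ≤ 2 * N + τ := by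
    intro n
    have h1 := dist_triangle4 x' ((w n)⁻¹ • ys n) (((w n)⁻¹ * g * w n) • ((w n)⁻¹ • ys n))
      (((w n)⁻¹ * g * w n) • x')
    have h2 : dist (((w n)⁻¹ * g * w n) • ((w n)⁻¹ • ys n)) (((w n)⁻¹ * g * w n) • x')
        = dist ((w n)⁻¹ • ys n) x' := dist_smul _ _ _
    rw [h2, hdisp n, dist_comm ((w n)⁻¹ • ys n) x'] at h1
    linarith [hyx n]
  obtain ⟨u, huF, hufib⟩ := exists_infinite_fiber' (hproper x' (2 * N + τ)) hbound
  obtain ⟨m₀, hm₀⟩ := hufib.nonempty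
  obtain ⟨R, hR⟩ : ∃ R : ℝ, R = dist ((w m₀)⁻¹ • x') x' := ⟨_, rfl⟩
  obtain ⟨K, hKfib, hKge⟩ := nat_set_unbounded hufib (Nat.ceil (R + N) + 1)
  -- v := w K * (w m₀)⁻¹ is in the centralizer
  have heq : (w m₀)⁻¹ * g * w m₀ = (w K)⁻¹ * g * w K := by
    rw [hm₀, hKfib]
  have hvz : w K * (w m₀)⁻¹ ∈ Zg g := by
    show g * (w K * (w m₀)⁻¹) = (w K * (w m₀)⁻¹) * g
    calc g * (w K * (w m₀)⁻¹) = w K * ((w K)⁻¹ * g * w K) * (w m₀)⁻¹ := by group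
      _ = w K * ((w m₀)⁻¹ * g * w m₀) * (w m₀)⁻¹ := by rw [heq]
      _ = (w K * (w m₀)⁻¹) * g := by group
  have hdist : dist ((w K * (w m₀)⁻¹) • x') (ys K) ≤ R + N := by
    have h1 : dist ((w K * (w m₀)⁻¹) • x') (w K • x') = R := by
      rw [mul_smul, show (w K) • x' = w K • x' from rfl]
      rw [dist_smul, hR]
    calc dist ((w K * (w m₀)⁻¹) • x') (ys K)
        ≤ dist ((w K * (w m₀)⁻¹) • x') (w K • x') + dist (w K • x') (ys K) :=
          dist_triangle _ _ _
      _ ≤ R + N := by linarith [hw K]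
  have hfar := hysfar K _ hvz
  have hRN : (K:ℝ) ≥ R + N := by
    have h1 : (Nat.ceil (R + N) : ℝ) ≥ R + N := Nat.le_ceil _
    have h2 : (K:ℝ) ≥ (Nat.ceil (R + N) : ℝ) + 1 := by exact_mod_cast hKge
    linarith
  linarith

/-- Construction of an axis for a hyperbolic isometry. -/
lemma exists_axis (hX : CAT0 X) {g : G} {x : X} (hx : x ∈ minSetSMul X g)
    (hτpos : 0 < tLenSMul X g) :
    ∃ ξ : ℝ → X, GeodesicRay ξ ∧ ξ 0 = x ∧ ∀ t, 0 ≤ t → ξ t ∈ minSetSMul X g := by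
  obtain ⟨τ, hτdef⟩ : ∃ τ : ℝ, τ = tLenSMul X g := ⟨_, rfl⟩
  have hτpos' : 0 < τ := hτdef ▸ hτpos
  have hd : dist x (g • x) = τ := by rw [hτdef]; exact hx
  obtain ⟨γ, hγ0, hγe, hγg⟩ := hX.1 x (g • x)
  rw [hd] at hγe hγg
  have hτle : ∀ y : X, τ ≤ dist y (g • y) := fun y => hτdef ▸ tLen_le g y
  -- every point of the segment is in the minimal set
  have hseg : ∀ s ∈ Icc (0:ℝ) τ, dist (γ s) (g • γ s) = τ := by
    intro s hs
    refine le_antisymm ?_ (hτle _)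
    have e1 : dist (γ s) (γ τ) = τ - s := by
      rw [hγg s hs τ ⟨hτpos'.le, le_rfl⟩, abs_of_nonpos (by linarith [hs.2])]; ring
    have e2 : dist (g • γ 0) (g • γ s) = s := by
      rw [dist_smul, hγg 0 ⟨le_rfl, hτpos'.le⟩ s hs, abs_of_nonpos (by linarith [hs.1])]; ring
    have e3 : g • γ 0 = γ τ := by rw [hγ0, hγe]
    calc dist (γ s) (g • γ s) ≤ dist (γ s) (γ τ) + dist (γ τ) (g • γ s) := dist_triangle _ _ _
      _ = τ := by rw [e1, ← e3, e2]; ring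
  -- dist x (g • (g • x)) = 2τ via the midpoint trick
  have h2τ : dist x (g • (g • x)) = 2 * τ := by
    have hm_half : τ / 2 ∈ Icc (0:ℝ) τ := ⟨by linarith, by linarith⟩
    have hmid1 : IsMid x (g • x) (γ (τ/2)) := by
      have a1 : dist (γ 0) (γ (τ/2)) = τ/2 := by
        rw [hγg 0 ⟨le_rfl, hτpos'.le⟩ (τ/2) hm_half, abs_of_nonpos (by linarith)]; ring
      have a2 : dist (γ τ) (γ (τ/2)) = τ/2 := by
        rw [hγg τ ⟨hτpos'.le, le_rfl⟩ (τ/2) hm_half, abs_of_nonneg (by linarith)]; ring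
      rw [hγ0] at a1
      rw [hγe] at a2
      exact ⟨by rw [a1, hd], by rw [a2, hd]⟩
    have hgx2 : dist (g • x) (g • (g • x)) = τ := by rw [dist_smul, hd]
    have b1 : dist x (γ (τ/2)) = τ/2 := by rw [hmid1.1, hd]
    have b2 : dist (g • x) (γ (τ/2)) = τ/2 := by rw [hmid1.2, hd]
    have hmid2 : IsMid (g • x) (g • (g • x)) (g • γ (τ/2)) := by
      constructor
      · rw [dist_smul, hgx2]; exact b1
      · have e4 : dist (g • (g • x)) (g • γ (τ/2)) = dist (g • x) (γ (τ/2)) := dist_smul _ _ _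
        rw [e4, hgx2]; exact b2
    have hkey := mid_dist_mid_apex hX hmid1.symm hmid2
    have hlow := hτle (γ (τ/2))
    have hsegmid := hseg (τ/2) hm_half
    have hup : dist x (g • (g • x)) ≤ 2 * τ := by
      calc dist x (g • (g • x)) ≤ dist x (g • x) + dist (g • x) (g • (g • x)) :=
            dist_triangle _ _ _
        _ = 2 * τ := by rw [hd, hgx2]; ring
    have : τ ≤ dist (γ (τ/2)) (g • γ (τ/2)) := hτle _
    rw [hsegmid] at *
    -- dist (γ (τ/2)) (g • γ (τ/2)) = τ and ≤ dist x (g•(g•x))/2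
    linarith [hkey, hsegmid]
  -- the concatenated path
  obtain ⟨ξ, hξdef⟩ : ∃ ξ : ℝ → X, ξ = fun t => g ^ (⌊t / τ⌋) • γ (t - ⌊t / τ⌋ * τ) := ⟨_, rfl⟩
  have hrep : ∀ t, ξ t = g ^ (⌊t / τ⌋) • γ (t - ⌊t / τ⌋ * τ) := fun t => by rw [hξdef]
  have hcomm : ∀ (k : ℤ) (y : X), g • (g ^ k • y) = g ^ k • (g • y) := by
    intro k y
    rw [← mul_smul, ← mul_smul, ((Commute.refl g).zpow_right k).eq]
  have hArg : ∀ t : ℝ, 0 ≤ t - ⌊t / τ⌋ * τ ∧ t - ⌊t / τ⌋ * τ < τ := by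
    intro t
    constructor
    · have h1 := Int.floor_le (t / τ)
      have h2 := mul_le_mul_of_nonneg_right h1 hτpos'.le
      rw [div_mul_cancel₀ _ hτpos'.ne'] at h2
      linarith
    · have h1 := Int.lt_floor_add_one (t / τ)
      have h2 := mul_lt_mul_of_pos_right h1 hτpos'
      rw [add_mul, one_mul, div_mul_cancel₀ _ hτpos'.ne'] at h2
      linarith
  have hon : ∀ t ∈ Icc (0:ℝ) τ, ξ t = γ t := by
    intro t ht
    rcases lt_or_eq_of_le ht.2 with h | h
    · have hf : ⌊t / τ⌋ = 0 := by
        rw [Int.floor_eq_zero_iff]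
        exact ⟨div_nonneg ht.1 hτpos'.le, (div_lt_one hτpos').2 h⟩
      rw [hrep t, hf]
      simp
    · subst h
      rw [hrep, div_self hτpos'.ne']
      norm_num
      rw [hγ0]
      exact hγe.symm
  have hshift : ∀ t : ℝ, ξ (t + τ) = g • ξ t := by
    intro t
    rw [hrep, hrep]
    have h1 : (t + τ) / τ = t / τ + 1 := by field_simp
    rw [h1, Int.floor_add_one]
    have h2 : (t + τ) - (↑(⌊t / τ⌋ + 1)) * τ = t - ⌊t / τ⌋ * τ := by push_cast; ring
    rw [h2, hcomm, ← mul_smul, ← zpow_add_one]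
  have hshiftn : ∀ (k : ℕ) (t : ℝ), ξ (t + k * τ) = g ^ (k : ℤ) • ξ t := by
    intro k
    induction k with
    | zero => intro t; simp
    | succ k ih =>
        intro t
        have e1 : t + (↑(k+1) : ℝ) * τ = (t + k * τ) + τ := by push_cast; ring
        rw [e1, hshift, ih t, hcomm, ← mul_smul, ← zpow_add_one]
        norm_num
  have e_hi : ∀ u : ℝ, τ ≤ u → u ≤ 2 * τ → ξ u = g • γ (u - τ) := by
    intro u h1 h2
    have h3 := hshift (u - τ)
    rw [sub_add_cancel] at h3
    rw [h3, hon (u - τ) ⟨by linarith, by linarith⟩]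
  have hend : dist (ξ 0) (ξ (2 * τ)) = 2 * τ := by
    rw [hon 0 ⟨le_rfl, hτpos'.le⟩, hγ0, e_hi (2 * τ) (by linarith) le_rfl]
    rw [show 2 * τ - τ = τ by ring, hγe]
    exact h2τ
  have keyB : ∀ s t : ℝ, 0 ≤ s → s ≤ t → t ≤ 2 * τ → dist (ξ s) (ξ t) = t - s := by
    intro s t hs hst ht
    rcases le_or_gt t τ with h | h
    · rw [hon s ⟨hs, by linarith⟩, hon t ⟨by linarith, h⟩,
        hγg s ⟨hs, by linarith⟩ t ⟨by linarith, h⟩, abs_of_nonpos (by linarith)]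
      ring
    · rcases le_or_gt τ s with h' | h'
      · rw [e_hi s h' (by linarith), e_hi t h.le ht, dist_smul,
          hγg (s - τ) ⟨by linarith, by linarith⟩ (t - τ) ⟨by linarith, by linarith⟩,
          abs_of_nonpos (by linarith)]
        ring
      · have d1 : dist (ξ s) (ξ τ) = τ - s := by
          rw [hon s ⟨hs, h'.le⟩, hon τ ⟨hτpos'.le, le_rfl⟩,
            hγg s ⟨hs, h'.le⟩ τ ⟨hτpos'.le, le_rfl⟩, abs_of_nonpos (by linarith)]
          ring
        have d2 : dist (ξ τ) (ξ t) = t - τ := by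
          rw [e_hi τ le_rfl (by linarith), e_hi t h.le ht, dist_smul,
            hγg (τ - τ) ⟨by linarith, by linarith⟩ (t - τ) ⟨by linarith, by linarith⟩,
            abs_of_nonpos (by linarith)]
          ring
        have d0 : dist (ξ 0) (ξ s) = s := by
          rw [hon 0 ⟨le_rfl, hτpos'.le⟩, hon s ⟨hs, h'.le⟩,
            hγg 0 ⟨le_rfl, hτpos'.le⟩ s ⟨hs, h'.le⟩, abs_of_nonpos (by linarith)]
          ring
        have d3 : dist (ξ t) (ξ (2 * τ)) = 2 * τ - t := by
          rw [e_hi t h.le ht, e_hi (2 * τ) (by linarith) le_rfl, dist_smul,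
            hγg (t - τ) ⟨by linarith, by linarith⟩ (2 * τ - τ) ⟨by linarith, by linarith⟩,
            abs_of_nonpos (by linarith)]
          ring
        have hup : dist (ξ s) (ξ t) ≤ t - s := by
          calc dist (ξ s) (ξ t) ≤ dist (ξ s) (ξ τ) + dist (ξ τ) (ξ t) := dist_triangle _ _ _
            _ = t - s := by rw [d1, d2]; ring
        have hlo := dist_triangle4 (ξ 0) (ξ s) (ξ t) (ξ (2 * τ))
        rw [hend, d0, d3] at hlo
        linarith
  have hB : IsGeodesicOn ξ 0 (2 * τ) := by
    intro s hs t ht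
    rcases le_total s t with h | h
    · rw [keyB s t hs.1 h ht.2, abs_of_nonpos (by linarith)]; ring
    · rw [dist_comm, keyB t s ht.1 h hs.2, abs_of_nonneg (by linarith)]
  have hC : ∀ k : ℕ, IsGeodesicOn ξ ((k : ℝ) * τ) (((k : ℝ) + 2) * τ) := by
    intro k s hs t ht
    have rs : ξ s = g ^ (k : ℤ) • ξ (s - k * τ) := by
      have h1 := hshiftn k (s - k * τ)
      rw [sub_add_cancel] at h1
      rw [h1]
    have rt : ξ t = g ^ (k : ℤ) • ξ (t - k * τ) := by
      have h1 := hshiftn k (t - k * τ)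
      rw [sub_add_cancel] at h1
      rw [h1]
    rw [rs, rt, dist_smul, hB (s - k * τ) ⟨by linarith [hs.1], by nlinarith [hs.2]⟩
      (t - k * τ) ⟨by linarith [ht.1], by nlinarith [ht.2]⟩,
      show s - k * τ - (t - k * τ) = s - t by ring]
  have hD : ∀ n : ℕ, IsGeodesicOn ξ 0 (((n : ℝ) + 2) * τ) := by
    intro n
    induction n with
    | zero => 
        have := hB
        rw [show ((0 : ℕ) : ℝ) + 2 = 2 by norm_num]
        rwa [show ((2 : ℝ)) * τ = 2 * τ from rfl] at this
    | succ n ih =>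
        have hc := hC (n + 1)
        push_cast at hc ⊢
        have := geodesic_extend hX (a := ((n : ℝ) + 1) * τ) (b := ((n : ℝ) + 2) * τ)
          (c := ((n : ℝ) + 1 + 2) * τ) (by positivity) (by nlinarith) (by nlinarith) ih hc
        rwa [show (n : ℝ) + 1 + 2 = n + 1 + 2 by ring] at this
  refine ⟨ξ, ?_, ?_, ?_⟩
  · intro s t hs ht
    obtain ⟨n, hn⟩ := exists_nat_gt (max s t / τ)
    have hsn : s ≤ ((n : ℝ) + 2) * τ := by
      have h1 : max s t / τ < n := hn
      rw [div_lt_iff₀ hτpos'] at h1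
      have := le_max_left s t
      nlinarith
    have htn : t ≤ ((n : ℝ) + 2) * τ := by
      have h1 : max s t / τ < n := hn
      rw [div_lt_iff₀ hτpos'] at h1
      have := le_max_right s t
      nlinarith
    exact hD n s ⟨hs, hsn⟩ t ⟨ht, htn⟩
  · rw [hon 0 ⟨le_rfl, hτpos'.le⟩, hγ0]
  · intro t _
    show dist (ξ t) (g • ξ t) = tLenSMul X g
    rw [hrep t, hcomm, dist_smul, ← hτdef]
    exact hseg _ ⟨(hArg t).1, (hArg t).2.le⟩


end ZgAxis
section FixMin

open Set Filter

variable {G : Type*} {X : Type*} [Group G] [MetricSpace X] [MulAction G X] [IsIsometricSMul G X]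

lemma smulRay_ray {g : G} {ξ : ℝ → X} (h : GeodesicRay ξ) : GeodesicRay (fun t => g • ξ t) :=
  fun s t hs ht => by rw [dist_smul]; exact h s t hs ht

/-- If `g` fixes the class of `ξr`, the asymptotic ray from a point of `Min(g)` stays
in `Min(g)`. -/
lemma fixed_ray_min (hX : CAT0 X) [ProperSpace X] {g : G} {x : X}
    (hx : x ∈ minSetSMul X g) {ξr : Ray X}
    (hasym : Asymptotic (fun t => g • ξr.1 t) ξr.1) :
    ∃ ξ : ℝ → X, GeodesicRay ξ ∧ ξ 0 = x ∧ (∀ t, 0 ≤ t → ξ t ∈ minSetSMul X g) ∧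
      ∀ t, 0 ≤ t → dist (ξ t) (ξr.1 t) ≤ 2 * dist x (ξr.1 0) := by
  obtain ⟨ξ, hξray, hξ0, hξasym⟩ := exists_asymptotic_ray hX ξr.2 x
  obtain ⟨Ng, hNg⟩ := hasym
  refine ⟨ξ, hξray, hξ0, ?_, hξasym⟩
  have hgray : GeodesicRay (fun t => g • ξ t) := smulRay_ray hξray
  have hmid : ∀ s t : ℝ, 0 ≤ s → 0 ≤ t →
      dist (ξ ((s + t)/2)) (g • ξ ((s + t)/2)) ≤
        (dist (ξ s) (g • ξ s) + dist (ξ t) (g • ξ t)) / 2 := by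
    intro s t hs ht
    have hs' : s ∈ Icc (0:ℝ) (s + t) := ⟨hs, by linarith⟩
    have ht' : t ∈ Icc (0:ℝ) (s + t) := ⟨ht, by linarith⟩
    have m1 := (hξray.isGeodesicOn (b := s + t)).mid hs' ht'
    have m2 := (hgray.isGeodesicOn (b := s + t)).mid hs' ht'
    exact mid_dist_mid hX m1 m2
  have hbd : ∀ t, 0 ≤ t → dist (ξ t) (g • ξ t) ≤
      2 * dist x (ξr.1 0) + Ng + 2 * dist x (ξr.1 0) := by
    intro t ht
    have h1 := hξasym t ht
    have h2 : dist (g • ξr.1 t) (ξr.1 t) ≤ Ng := hNg t ht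
    have h3 : dist (g • ξr.1 t) (g • ξ t) = dist (ξr.1 t) (ξ t) := dist_smul _ _ _
    have h4 := dist_triangle4 (ξ t) (ξr.1 t) (g • ξr.1 t) (g • ξ t)
    rw [h3] at h4
    rw [dist_comm (ξr.1 t) (g • ξr.1 t)] at h4
    rw [dist_comm (ξr.1 t) (ξ t)] at h4
    linarith
  have h0 : dist (ξ 0) (g • ξ 0) = tLenSMul X g := by rw [hξ0]; exact hx
  intro t ht
  have hle := midconvex_bounded_le hmid hbd t ht
  rw [h0] at hle
  exact le_antisymm hle (tLen_le g (ξ t))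

/-- Criterion for convergence to a boundary point: bounded distance from the ray. -/
lemma convergesTo_of_bounded (hX : CAT0 X) {ξ : Ray X} {x₀ : X} (hξ0 : ξ.1 0 = x₀)
    {x : ℕ → X} {C : ℝ} (hC : 0 ≤ C) (hbd : ∀ i : ℕ, dist (x i) (ξ.1 (i : ℝ)) ≤ C) :
    ConvergesTo x₀ x ξ := by
  intro r hr ε hε
  obtain ⟨n₀, hn₀⟩ := exists_nat_gt (r + C + 1 + 2 * C * r / ε)
  refine ⟨n₀, fun n hn => ?_⟩
  have hdray : dist x₀ (ξ.1 n) = (n : ℝ) := by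
    rw [← hξ0, ξ.2 0 n le_rfl n.cast_nonneg, zero_sub, abs_neg, abs_of_nonneg n.cast_nonneg]
  have hDlow : (n : ℝ) - C ≤ dist x₀ (x n) := by
    have h1 := dist_triangle x₀ (x n) (ξ.1 (n : ℝ))
    rw [hdray] at h1
    linarith [hbd n]
  have hCrε : 0 ≤ 2 * C * r / ε := by positivity
  have hnn₀ : (n₀ : ℝ) ≤ (n : ℝ) := Nat.cast_le.2 hn
  have hrD : r < dist x₀ (x n) := by linarith
  refine ⟨hrD, fun γ hγg hγ0 hγe => ?_⟩
  have hDpos : 0 < dist x₀ (x n) := lt_trans hr hrD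
  have htt : r / dist x₀ (x n) ∈ Icc (0:ℝ) 1 :=
    ⟨div_nonneg hr.le hDpos.le, (div_le_one hDpos).2 hrD.le⟩
  have hξgeo : IsGeodesicOn ξ.1 0 (dist x₀ (x n)) := ξ.2.isGeodesicOn
  have hconv := geodesic_convex hX dist_nonneg dist_nonneg hγg hξgeo _ htt
  rw [hγ0, hγe, hξ0, div_mul_cancel₀ _ hDpos.ne'] at hconv
  simp only [dist_self] at hconv
  have hend : dist (x n) (ξ.1 (dist x₀ (x n))) ≤ 2 * C := by
    have h1 : dist (ξ.1 (n : ℝ)) (ξ.1 (dist x₀ (x n))) = |(n : ℝ) - dist x₀ (x n)| :=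
      ξ.2 _ _ n.cast_nonneg hDpos.le
    have h2 : |(n : ℝ) - dist x₀ (x n)| ≤ C := by
      rw [abs_le]
      constructor
      · have h3 := dist_triangle x₀ (ξ.1 (n:ℝ)) (x n)
        rw [hdray, dist_comm (ξ.1 (n:ℝ)) (x n)] at h3
        linarith [hbd n]
      · linarith
    calc dist (x n) (ξ.1 (dist x₀ (x n)))
        ≤ dist (x n) (ξ.1 (n : ℝ)) + dist (ξ.1 (n : ℝ)) (ξ.1 (dist x₀ (x n))) :=
          dist_triangle _ _ _
      _ ≤ 2 * C := by rw [h1]; linarith [hbd n]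
  have hmain : dist (γ r) (ξ.1 r) ≤ r / dist x₀ (x n) * (2 * C) := by
    have h5 : r / dist x₀ (x n) * dist (x n) (ξ.1 (dist x₀ (x n)))
        ≤ r / dist x₀ (x n) * (2 * C) := mul_le_mul_of_nonneg_left hend htt.1
    calc dist (γ r) (ξ.1 r)
        ≤ (1 - r / dist x₀ (x n)) * 0 + r / dist x₀ (x n) * dist (x n) (ξ.1 (dist x₀ (x n))) :=
          hconv
      _ ≤ r / dist x₀ (x n) * (2 * C) := by linarith
  rw [dist_comm]
  have hfin : r / dist x₀ (x n) * (2 * C) < ε := by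
    rw [div_mul_eq_mul_div, div_lt_iff₀ hDpos]
    have hkey : ε * (2 * C * r / ε) = 2 * C * r := by field_simp
    have hDn : r + 1 + 2 * C * r / ε < dist x₀ (x n) := by linarith
    nlinarith [mul_lt_mul_of_pos_left hDn hε, mul_pos hε (show (0:ℝ) < r + 1 by linarith)]
  linarith

end FixMin
/-- **Corollary 3.** For a geometric action of `G` on a proper CAT(0)
space `X` and `g ∈ G` of infinite order: `g` acts as a hyperbolic isometry and
`𝓕_g = L(Z_g) = ∂Min(g)`; in particular `𝓕_g ≠ ∅`. -/
theorem infinite_order_fixedSet {G X : Type*} [Group G] [MetricSpace X] [ProperSpace X]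
    [MulAction G X] [IsIsometricSMul G X]
    (hX : CAT0 X) (hproper : ProperAction G X) (hcocompact : CocompactAction G X)
    (g : G) (hg : ¬ IsOfFinOrder g) (x₀ : X) :
    ((minSetSMul X g).Nonempty ∧ 0 < tLenSMul X g) ∧
    {α : Boundary X | boundarySMul g α = α} = LimitSet (Zg g) x₀ ∧
    {α : Boundary X | boundarySMul g α = α} = subBoundary (minSetSMul X g) ∧
    {α : Boundary X | boundarySMul g α = α}.Nonempty := by
  have hminne : (minSetSMul X g).Nonempty := minSet_nonempty hproper hcocompact g x₀
  have hpos : 0 < tLenSMul X g := tLen_pos hproper g hg hminne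
  obtain ⟨x, hx⟩ := hminne
  have hmk_smul : ∀ ξr : Ray X, boundarySMul g (Quotient.mk (raySetoid X) ξr)
      = Quotient.mk (raySetoid X) (smulRay g ξr) := fun ξr => rfl
  -- (1) subBoundary Min ⊆ Fix
  have h1 : subBoundary (minSetSMul X g) ⊆ {α : Boundary X | boundarySMul g α = α} := by
    rintro α ⟨ξr, hmem, hmk⟩
    show boundarySMul g α = α
    rw [← hmk, hmk_smul]
    refine Quotient.sound ⟨tLenSMul X g, fun t ht => ?_⟩
    show dist (g • ξr.1 t) (ξr.1 t) ≤ tLenSMul X g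
    rw [dist_comm]
    exact le_of_eq (hmem t ht)
  -- (2) Fix ⊆ subBoundary Min
  have h2 : {α : Boundary X | boundarySMul g α = α} ⊆ subBoundary (minSetSMul X g) := by
    intro α hα
    obtain ⟨ξr, hmk⟩ := Quotient.exists_rep α
    have hα' : boundarySMul g (Quotient.mk (raySetoid X) ξr) = Quotient.mk (raySetoid X) ξr := by
      rw [hmk]; exact hα
    rw [hmk_smul] at hα'
    have hasym : Asymptotic (fun t => g • ξr.1 t) ξr.1 := Quotient.exact hα'
    obtain ⟨ξ, hξray, hξ0, hξmin, hξnear⟩ := fixed_ray_min hX hx hasym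
    refine ⟨⟨ξ, hξray⟩, hξmin, ?_⟩
    rw [← hmk]
    exact Quotient.sound ⟨2 * dist x (ξr.1 0), hξnear⟩
  -- (3) LimitSet ⊆ Fix
  have h3 : LimitSet (Zg g) x₀ ⊆ {α : Boundary X | boundarySMul g α = α} := by
    rintro α ⟨ξr, hξr0, hmk, v, hvZ, hconv⟩
    show boundarySMul g α = α
    rw [← hmk, hmk_smul]
    refine Quotient.sound ⟨dist x₀ (g • x₀), fun t ht => ?_⟩
    show dist (g • ξr.1 t) (ξr.1 t) ≤ dist x₀ (g • x₀)
    rcases eq_or_lt_of_le ht with h | h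
    · rw [← h, hξr0, dist_comm]
    · refine le_of_forall_pos_le_add (fun ε hε => ?_)
      obtain ⟨n₀, hn₀⟩ := hconv t h (ε/2) (half_pos hε)
      obtain ⟨hrD, hgeo⟩ := hn₀ n₀ le_rfl
      obtain ⟨γ, hγ0, hγe, hγg⟩ := hX.1 x₀ (v n₀ • x₀)
      have hclose := hgeo γ hγg hγ0 hγe
      have hDpos : 0 < dist x₀ (v n₀ • x₀) := lt_trans h hrD
      have hσ : IsGeodesicOn (fun s => g • γ s) 0 (dist x₀ (v n₀ • x₀)) := by
        intro a ha b hb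
        show dist (g • γ a) (g • γ b) = _
        rw [dist_smul]; exact hγg a ha b hb
      have htt : t / dist x₀ (v n₀ • x₀) ∈ Set.Icc (0:ℝ) 1 :=
        ⟨div_nonneg ht hDpos.le, (div_le_one hDpos).2 hrD.le⟩
      have hconv2 := geodesic_convex hX dist_nonneg dist_nonneg hγg hσ _ htt
      rw [div_mul_cancel₀ _ hDpos.ne'] at hconv2
      have hconv2' : dist (γ t) (g • γ t) ≤
          (1 - t / dist x₀ (v n₀ • x₀)) * dist (γ 0) (g • γ 0) +
          t / dist x₀ (v n₀ • x₀) * dist (γ (dist x₀ (v n₀ • x₀)))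
            (g • γ (dist x₀ (v n₀ • x₀))) := hconv2
      have hz' : g * v n₀ = v n₀ * g := hvZ n₀
      have hend : dist (γ (dist x₀ (v n₀ • x₀))) (g • γ (dist x₀ (v n₀ • x₀)))
          = dist x₀ (g • x₀) := by
        rw [hγe]
        have hz : g • (v n₀ • x₀) = v n₀ • (g • x₀) := by
          rw [← mul_smul, ← mul_smul, hz']
        rw [hz, dist_smul]
      have hstart : dist (γ 0) (g • γ 0) = dist x₀ (g • x₀) := by rw [hγ0]
      rw [hstart, hend] at hconv2'
      have hmid : dist (γ t) (g • γ t) ≤ dist x₀ (g • x₀) := by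
        have he : (1 - t / dist x₀ (v n₀ • x₀)) * dist x₀ (g • x₀) +
            t / dist x₀ (v n₀ • x₀) * dist x₀ (g • x₀) = dist x₀ (g • x₀) := by ring
        linarith
      have htri := dist_triangle4 (g • ξr.1 t) (g • γ t) (γ t) (ξr.1 t)
      have hs1 : dist (g • ξr.1 t) (g • γ t) = dist (ξr.1 t) (γ t) := dist_smul _ _ _
      have hs2 : dist (g • γ t) (γ t) = dist (γ t) (g • γ t) := dist_comm _ _
      have hs3 : dist (γ t) (ξr.1 t) = dist (ξr.1 t) (γ t) := dist_comm _ _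
      rw [hs1, hs2, hs3] at htri
      linarith
  -- (4) Fix ⊆ LimitSet
  have h4 : {α : Boundary X | boundarySMul g α = α} ⊆ LimitSet (Zg g) x₀ := by
    intro α hα
    obtain ⟨ξr, hmk⟩ := Quotient.exists_rep α
    have hα' : boundarySMul g (Quotient.mk (raySetoid X) ξr) = Quotient.mk (raySetoid X) ξr := by
      rw [hmk]; exact hα
    rw [hmk_smul] at hα'
    have hasym : Asymptotic (fun t => g • ξr.1 t) ξr.1 := Quotient.exact hα'
    obtain ⟨ξm, hξmray, hξm0, hξmmin, hξmnear⟩ := fixed_ray_min hX hx hasym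
    obtain ⟨ξ', hξ'ray, hξ'0, hξ'near⟩ := exists_asymptotic_ray hX ξr.2 x₀
    obtain ⟨M, hM⟩ := zg_cocompact hproper hcocompact g x
    choose v hvZ hvd using fun i : ℕ => hM (ξm (i : ℝ)) (hξmmin (i : ℝ) i.cast_nonneg)
    have hMnn : 0 ≤ M := le_trans dist_nonneg (hvd 0)
    obtain ⟨C₀, hC₀⟩ : ∃ C₀ : ℝ, C₀ = dist x₀ x + M + 2 * dist x (ξr.1 0) +
        2 * dist x₀ (ξr.1 0) := ⟨_, rfl⟩
    have hC₀nn : 0 ≤ C₀ := by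
      rw [hC₀]
      have := dist_nonneg (x := x₀) (y := x)
      have := dist_nonneg (x := x) (y := ξr.1 0)
      have := dist_nonneg (x := x₀) (y := ξr.1 0)
      linarith
    have hbound : ∀ i : ℕ, dist (v i • x₀) (ξ' (i : ℝ)) ≤ C₀ := by
      intro i
      have e1 : dist (v i • x₀) (v i • x) = dist x₀ x := dist_smul _ _ _
      have t1 : dist (v i • x₀) (ξr.1 (i:ℝ)) ≤ dist (v i • x₀) (v i • x) +
          dist (v i • x) (ξm (i:ℝ)) + dist (ξm (i:ℝ)) (ξr.1 (i:ℝ)) := dist_triangle4 _ _ _ _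
      have t2 : dist (v i • x₀) (ξ' (i:ℝ)) ≤ dist (v i • x₀) (ξr.1 (i:ℝ)) +
          dist (ξr.1 (i:ℝ)) (ξ' (i:ℝ)) := dist_triangle _ _ _
      have b1 := hvd i
      have b2 := hξmnear (i:ℝ) i.cast_nonneg
      have b3 := hξ'near (i:ℝ) i.cast_nonneg
      rw [dist_comm (ξr.1 (i:ℝ)) (ξ' (i:ℝ))] at t2
      rw [e1] at t1
      rw [hC₀]
      linarith
    have hconv := convergesTo_of_bounded hX (ξ := ⟨ξ', hξ'ray⟩) hξ'0 hC₀nn hbound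
    refine ⟨⟨ξ', hξ'ray⟩, hξ'0, ?_, v, hvZ, hconv⟩
    rw [← hmk]
    exact Quotient.sound ⟨2 * dist x₀ (ξr.1 0), hξ'near⟩
  refine ⟨⟨⟨x, hx⟩, hpos⟩, Set.Subset.antisymm h4 h3, Set.Subset.antisymm h2 h1, ?_⟩
  obtain ⟨ξa, hξaray, hξa0, hξamin⟩ := exists_axis hX hx hpos
  exact ⟨Quotient.mk (raySetoid X) ⟨ξa, hξaray⟩, h1 ⟨⟨ξa, hξaray⟩, hξamin, rfl⟩⟩
end
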